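/- arXiv:2003.07222 — 10 statements merged into one kernel-verified Lean document; each statement's English description precedes it below -/
import Mathlib

section
/- Let X be a complex Banach space, T a bounded linear operator on X with ‖T‖ ≤ 1, and P a bounded projection (P ∘ P = P) on X with ‖P‖ ≤ 1 and PT = TP. Then the following three conditions are equivalent: (i) T is uniformly P-ergodic; (ii) TP = P and there exists n₀ ∈ ℕ such that δ_P(T^{n₀}) < 1; (iii) TP = P and r(T − P) < 1. -/
open Filter Topology
open scoped ENNReal NNReal

/-- The generalized Dobrushin ergodicity coefficient of `T` with respect to `P`:
`δ_P(T) = sup {‖T x‖ : P x = 0, ‖x‖ ≤ 1}`. -/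
noncomputable def dobrushinCoeff {X : Type*} [NormedAddCommGroup X] [NormedSpace ℂ X]
    (P T : X →L[ℂ] X) : ℝ :=
  sSup {r : ℝ | ∃ x : X, P x = 0 ∧ ‖x‖ ≤ 1 ∧ r = ‖T x‖}

section Aux

variable {X : Type*} [NormedAddCommGroup X] [NormedSpace ℂ X]

lemma st0_bddAbove (P S : X →L[ℂ] X) :
    BddAbove {r : ℝ | ∃ x : X, P x = 0 ∧ ‖x‖ ≤ 1 ∧ r = ‖S x‖} := by
  refine ⟨‖S‖, ?_⟩
  rintro r ⟨x, hx, hx1, rfl⟩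
  calc ‖S x‖ ≤ ‖S‖ * ‖x‖ := S.le_opNorm x
    _ ≤ ‖S‖ * 1 := by
        exact mul_le_mul_of_nonneg_left hx1 (norm_nonneg S)
    _ = ‖S‖ := mul_one _

lemma st0_mem_zero (P S : X →L[ℂ] X) :
    (0 : ℝ) ∈ {r : ℝ | ∃ x : X, P x = 0 ∧ ‖x‖ ≤ 1 ∧ r = ‖S x‖} :=
  ⟨0, by simp⟩

lemma st0_delta_nonneg (P S : X →L[ℂ] X) : 0 ≤ dobrushinCoeff P S :=
  le_csSup (st0_bddAbove P S) (st0_mem_zero P S)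

lemma st0_delta_le (P S : X →L[ℂ] X) : dobrushinCoeff P S ≤ ‖S - P‖ := by
  refine csSup_le ⟨0, st0_mem_zero P S⟩ ?_
  rintro r ⟨x, hx, hx1, rfl⟩
  have : ‖S x‖ = ‖(S - P) x‖ := by
    simp [ContinuousLinearMap.sub_apply, hx]
  rw [this]
  calc ‖(S - P) x‖ ≤ ‖S - P‖ * ‖x‖ := (S - P).le_opNorm x
    _ ≤ ‖S - P‖ * 1 := mul_le_mul_of_nonneg_left hx1 (norm_nonneg _)
    _ = ‖S - P‖ := mul_one _

lemma st0_norm_le_delta (P S : X →L[ℂ] X) {x : X} (hx : P x = 0) :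
    ‖S x‖ ≤ dobrushinCoeff P S * ‖x‖ := by
  rcases eq_or_ne x 0 with rfl | hx0
  · simp
  · have hxn : (0 : ℝ) < ‖x‖ := norm_pos_iff.mpr hx0
    set u : X := ((‖x‖ : ℂ))⁻¹ • x with hu
    have hcu : ‖((‖x‖ : ℂ))⁻¹‖ = ‖x‖⁻¹ := by
      simp [norm_inv, Complex.norm_real, Real.norm_eq_abs, abs_of_nonneg (norm_nonneg x)]
    have hun : ‖u‖ = 1 := by
      rw [hu, norm_smul, hcu, inv_mul_cancel₀ hxn.ne']
    have hPu : P u = 0 := by rw [hu, map_smul, hx, smul_zero]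
    have hmem : ‖S u‖ ∈ {r : ℝ | ∃ y : X, P y = 0 ∧ ‖y‖ ≤ 1 ∧ r = ‖S y‖} :=
      ⟨u, hPu, le_of_eq hun, rfl⟩
    have h1 : ‖S u‖ ≤ dobrushinCoeff P S := le_csSup (st0_bddAbove P S) hmem
    have h2 : ‖S u‖ = ‖x‖⁻¹ * ‖S x‖ := by
      rw [hu, map_smul, norm_smul, hcu]
    rw [h2] at h1
    calc ‖S x‖ = ‖x‖ * (‖x‖⁻¹ * ‖S x‖) := by field_simp
      _ ≤ ‖x‖ * dobrushinCoeff P S := mul_le_mul_of_nonneg_left h1 hxn.le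
      _ = dobrushinCoeff P S * ‖x‖ := mul_comm _ _

variable [CompleteSpace X]

/-- geometric decay of powers from a single power of norm `< 1` -/
lemma st0_tendsto_pow (a : X →L[ℂ] X) {m : ℕ} (hm : 1 ≤ m) (hc : ‖a ^ m‖ < 1) :
    Tendsto (fun n : ℕ => ‖a ^ n‖) atTop (𝓝 0) := by
  set c : ℝ := ‖a ^ m‖ with hcdef
  have hc0 : 0 ≤ c := norm_nonneg _
  set M : ℝ := max 1 ‖a‖ with hM
  have hM1 : (1 : ℝ) ≤ M := le_max_left _ _
  have hM0 : (0 : ℝ) ≤ M := le_trans zero_le_one hM1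
  have hrem : ∀ r : ℕ, r < m → ‖a ^ r‖ ≤ M ^ m := by
    intro r hr
    rcases Nat.eq_zero_or_pos r with rfl | hr0
    · rw [pow_zero]; exact le_trans (ContinuousLinearMap.norm_id_le) (one_le_pow₀ hM1)
    · calc ‖a ^ r‖ ≤ ‖a‖ ^ r := norm_pow_le' a hr0
        _ ≤ M ^ r := pow_le_pow_left₀ (norm_nonneg a) (le_max_right _ _) r
        _ ≤ M ^ m := pow_le_pow_right₀ hM1 hr.le
  have hbound : ∀ n : ℕ, ‖a ^ n‖ ≤ M ^ m * c ^ (n / m) := by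
    intro n
    have hdecomp : a ^ n = (a ^ m) ^ (n / m) * a ^ (n % m) := by
      rw [← pow_mul, ← pow_add, Nat.div_add_mod]
    calc ‖a ^ n‖ ≤ ‖(a ^ m) ^ (n / m)‖ * ‖a ^ (n % m)‖ := by
          rw [hdecomp]; exact norm_mul_le _ _
      _ ≤ c ^ (n / m) * (M ^ m) := by
          refine mul_le_mul ?_ (hrem _ (Nat.mod_lt n hm)) (norm_nonneg _)
            (pow_nonneg hc0 _)
          rcases Nat.eq_zero_or_pos (n / m) with hq0' | hqpos
          · rw [hq0']
            rw [pow_zero]; exact ContinuousLinearMap.norm_id_le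
          · exact norm_pow_le' _ hqpos
      _ = M ^ m * c ^ (n / m) := mul_comm _ _
  have hdiv : Tendsto (fun n : ℕ => n / m) atTop atTop := by
    refine tendsto_atTop_atTop.mpr fun b => ⟨b * m, fun n hn => ?_⟩
    exact (Nat.le_div_iff_mul_le hm).mpr hn
  have hpow : Tendsto (fun n : ℕ => c ^ (n / m)) atTop (𝓝 0) :=
    (tendsto_pow_atTop_nhds_zero_of_lt_one hc0 hc).comp hdiv
  have hmul : Tendsto (fun n : ℕ => M ^ m * c ^ (n / m)) atTop (𝓝 0) := by
    simpa using hpow.const_mul (M ^ m)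
  exact squeeze_zero (fun n => norm_nonneg _) hbound hmul

variable {T P : X →L[ℂ] X}

lemma st0_pow_mul (hTP : T * P = P) : ∀ n : ℕ, T ^ n * P = P := by
  intro n
  induction n with
  | zero => simp
  | succ k ih => rw [pow_succ, mul_assoc, hTP, ih]

lemma st0_Apow (hProj : P * P = P) (hComm : P * T = T * P) (hTP : T * P = P) :
    ∀ n : ℕ, (T - P) ^ (n + 1) = T ^ (n + 1) - P := by
  intro n
  induction n with
  | zero => simp
  | succ k ih =>
    have hPT : P * T = P := by rw [hComm, hTP]
    calc (T - P) ^ (k + 2) = (T - P) ^ (k + 1) * (T - P) := by rw [pow_succ]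
      _ = (T ^ (k + 1) - P) * (T - P) := by rw [ih]
      _ = T ^ (k + 1) * T - T ^ (k + 1) * P - (P * T - P * P) := by
          rw [sub_mul, mul_sub, mul_sub]
      _ = T ^ (k + 2) - P - (P - P) := by
          rw [← pow_succ, st0_pow_mul hTP, hPT, hProj]
      _ = T ^ (k + 2) - P := by rw [sub_self, sub_zero]

lemma st0_PA (hProj : P * P = P) (hComm : P * T = T * P) (hTP : T * P = P) :
    P * (T - P) = 0 := by
  rw [mul_sub, hComm, hTP, hProj, sub_self]

lemma st0_PApow (hProj : P * P = P) (hComm : P * T = T * P) (hTP : T * P = P) :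
    ∀ n : ℕ, P * (T - P) ^ (n + 1) = 0 := by
  intro n
  induction n with
  | zero => simpa using st0_PA hProj hComm hTP
  | succ k ih =>
    rw [pow_succ, ← mul_assoc, ih, zero_mul]

end Aux

theorem stmt0 {X : Type*} [NormedAddCommGroup X] [NormedSpace ℂ X] [CompleteSpace X]
    (T P : X →L[ℂ] X) (hT : ‖T‖ ≤ 1) (hPnorm : ‖P‖ ≤ 1)
    (hProj : P.comp P = P) (hComm : P.comp T = T.comp P) :
    (Tendsto (fun n : ℕ => ‖T ^ n - P‖) atTop (𝓝 0) ↔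
      (T.comp P = P ∧ ∃ n₀ : ℕ, dobrushinCoeff P (T ^ n₀) < 1)) ∧
    (Tendsto (fun n : ℕ => ‖T ^ n - P‖) atTop (𝓝 0) ↔
      (T.comp P = P ∧ spectralRadius ℂ (T - P) < 1)) := by
  rw [← ContinuousLinearMap.mul_def P P] at hProj
  rw [← ContinuousLinearMap.mul_def P T, ← ContinuousLinearMap.mul_def T P] at hComm
  -- (i) implies T * P = P
  have hTP_of_i : Tendsto (fun n : ℕ => ‖T ^ n - P‖) atTop (𝓝 0) → T * P = P := by
    intro h
    have h1 : Tendsto (fun n : ℕ => T ^ n) atTop (𝓝 P) := by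
      rw [tendsto_iff_norm_sub_tendsto_zero]; exact h
    have h2 : Tendsto (fun n : ℕ => T ^ (n + 1)) atTop (𝓝 P) :=
      h1.comp (tendsto_add_atTop_nat 1)
    have h3 : Tendsto (fun n : ℕ => T * T ^ n) atTop (𝓝 (T * P)) :=
      h1.const_mul T
    have h2' : Tendsto (fun n : ℕ => T * T ^ n) atTop (𝓝 P) := by
      simpa only [pow_succ'] using h2
    exact tendsto_nhds_unique h3 h2'
  -- (i) implies existence of m ≥ 1 with ‖T^m - P‖ < 1
  have hsmall_of_i : Tendsto (fun n : ℕ => ‖T ^ n - P‖) atTop (𝓝 0) →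
      ∃ m : ℕ, 1 ≤ m ∧ ‖T ^ m - P‖ < 1 := by
    intro h
    obtain ⟨m, hm1, hm2⟩ := ((eventually_ge_atTop 1).and
      (h.eventually_lt_const one_pos)).exists
    exact ⟨m, hm1, hm2⟩
  -- from T*P = P and a small power of (T - P), deduce (i)
  have hi_of_small : T * P = P → (∃ m : ℕ, 1 ≤ m ∧ ‖(T - P) ^ m‖ < 1) →
      Tendsto (fun n : ℕ => ‖T ^ n - P‖) atTop (𝓝 0) := by
    rintro hTP ⟨m, hm1, hm2⟩
    have h0 := st0_tendsto_pow (T - P) hm1 hm2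
    refine h0.congr' ?_
    filter_upwards [eventually_ge_atTop 1] with n hn
    obtain ⟨k, rfl⟩ := Nat.exists_eq_add_of_le hn
    rw [add_comm 1 k, st0_Apow hProj hComm hTP]
  constructor
  · -- (i) ↔ (ii)
    constructor
    · intro h
      have hTP := hTP_of_i h
      refine ⟨by rwa [ContinuousLinearMap.mul_def] at hTP, ?_⟩
      obtain ⟨m, _, hm2⟩ := hsmall_of_i h
      exact ⟨m, lt_of_le_of_lt (st0_delta_le P (T ^ m)) hm2⟩
    · rintro ⟨hTP', n₀, hq⟩
      have hTP : T * P = P := by rwa [← ContinuousLinearMap.mul_def] at hTP'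
      rcases Nat.eq_zero_or_pos n₀ with rfl | hn₀
      · -- n₀ = 0 : then P = 1 and T = 1
        rw [pow_zero] at hq
        have hker : ∀ x : X, P x = 0 → x = 0 := by
          intro x hx
          by_contra hx0
          have hxn : (0 : ℝ) < ‖x‖ := norm_pos_iff.mpr hx0
          have h1 : ‖(1 : X →L[ℂ] X) x‖ ≤ dobrushinCoeff P 1 * ‖x‖ :=
            st0_norm_le_delta P 1 hx
          simp only [ContinuousLinearMap.one_apply] at h1
          have h2 := mul_lt_mul_of_pos_right hq hxn
          rw [one_mul] at h2
          linarith
        have hP1 : P = 1 := by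
          ext x
          have : P (P x - x) = 0 := by
            have hPP : P (P x) = P x := by
              have := congrArg (fun S : X →L[ℂ] X => S x) hProj
              simpa [ContinuousLinearMap.mul_apply] using this
            simp [map_sub, hPP]
          simpa [ContinuousLinearMap.one_apply] using sub_eq_zero.mp (hker _ this)
        have hT1 : T = 1 := by
          rw [hP1, mul_one] at hTP; exact hTP
        have : ∀ n : ℕ, ‖T ^ n - P‖ = 0 := by
          intro n; rw [hT1, hP1, one_pow, sub_self, norm_zero]
        simpa [this] using (tendsto_const_nhds : Tendsto (fun _ : ℕ => (0:ℝ)) atTop (𝓝 0))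
      · -- n₀ ≥ 1
        set q : ℝ := dobrushinCoeff P (T ^ n₀) with hqdef
        have hq0 : 0 ≤ q := st0_delta_nonneg P (T ^ n₀)
        set C : ℝ := ‖(T - P) ^ n₀‖ with hC
        have hC0 : 0 ≤ C := norm_nonneg _
        obtain ⟨k₀, rfl⟩ : ∃ k, n₀ = k + 1 := ⟨n₀ - 1, by omega⟩
        have key : ∀ (j : ℕ) (x : X),
            ‖((T - P) ^ ((k₀ + 1) * (j + 1))) x‖ ≤ q ^ j * C * ‖x‖ := by
          intro j
          induction j with
          | zero =>
            intro x
            simpa using ((T - P) ^ ((k₀ + 1) * 1)).le_opNorm x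
          | succ i ih =>
            intro x
            have hsplit : (T - P) ^ ((k₀ + 1) * (i + 2))
                = (T - P) ^ (k₀ + 1) * (T - P) ^ ((k₀ + 1) * (i + 1)) := by
              rw [← pow_add]; ring_nf
            set y : X := ((T - P) ^ ((k₀ + 1) * (i + 1))) x with hy
            have hPy : P y = 0 := by
              have h := st0_PApow hProj hComm hTP ((k₀ + 1) * (i + 1) - 1)
              have he : (k₀ + 1) * (i + 1) - 1 + 1 = (k₀ + 1) * (i + 1) := by
                have : 1 ≤ (k₀ + 1) * (i + 1) := Nat.one_le_iff_ne_zero.mpr (by positivity)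
                omega
              rw [he] at h
              have := congrArg (fun S : X →L[ℂ] X => S x) h
              simpa [ContinuousLinearMap.mul_apply, hy] using this
            have hTy : ((T - P) ^ (k₀ + 1)) y = (T ^ (k₀ + 1)) y := by
              rw [st0_Apow hProj hComm hTP k₀]
              simp [ContinuousLinearMap.sub_apply, hPy]
            calc ‖((T - P) ^ ((k₀ + 1) * (i + 2))) x‖
                = ‖((T - P) ^ (k₀ + 1)) y‖ := by
                  rw [hsplit]; simp [ContinuousLinearMap.mul_apply, hy]
              _ = ‖(T ^ (k₀ + 1)) y‖ := by rw [hTy]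
              _ ≤ q * ‖y‖ := st0_norm_le_delta P (T ^ (k₀ + 1)) hPy
              _ ≤ q * (q ^ i * C * ‖x‖) := mul_le_mul_of_nonneg_left (ih x) hq0
              _ = q ^ (i + 1) * C * ‖x‖ := by ring
        have keyop : ∀ j : ℕ, ‖(T - P) ^ ((k₀ + 1) * (j + 1))‖ ≤ q ^ j * C := by
          intro j
          exact ContinuousLinearMap.opNorm_le_bound _
            (by positivity) (key j)
        have htend : Tendsto (fun j : ℕ => q ^ j * C) atTop (𝓝 0) := by
          simpa using (tendsto_pow_atTop_nhds_zero_of_lt_one hq0 hq).mul_const C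
        obtain ⟨j, hj⟩ := (htend.eventually_lt_const one_pos).exists
        refine hi_of_small hTP ⟨(k₀ + 1) * (j + 1),
          Nat.one_le_iff_ne_zero.mpr (Nat.mul_ne_zero k₀.succ_ne_zero j.succ_ne_zero), ?_⟩
        exact lt_of_le_of_lt (keyop j) hj
  · -- (i) ↔ (iii)
    constructor
    · intro h
      have hTP := hTP_of_i h
      refine ⟨by rwa [ContinuousLinearMap.mul_def] at hTP, ?_⟩
      obtain ⟨m, hm1, hm2⟩ := hsmall_of_i h
      obtain ⟨k, rfl⟩ : ∃ k, m = k + 1 := ⟨m - 1, by omega⟩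
      have hA : ‖(T - P) ^ (k + 1)‖ < 1 := by
        rw [st0_Apow hProj hComm hTP k]; exact hm2
      have hle := spectrum.spectralRadius_le_pow_nnnorm_pow_one_div ℂ (T - P) k
      have h1 : ((‖(T - P) ^ (k + 1)‖₊ : ℝ≥0∞)) ^ (1 / (k + 1 : ℝ)) < 1 := by
        apply ENNReal.rpow_lt_one
        · rw [← ENNReal.coe_one, ENNReal.coe_lt_coe]
          exact_mod_cast hA
        · positivity
      have h2 : ((‖(1 : X →L[ℂ] X)‖₊ : ℝ≥0∞)) ^ (1 / (k + 1 : ℝ)) ≤ 1 := by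
        apply ENNReal.rpow_le_one
        · rw [← ENNReal.coe_one, ENNReal.coe_le_coe]
          exact_mod_cast (ContinuousLinearMap.norm_id_le : ‖(1 : X →L[ℂ] X)‖ ≤ 1)
        · positivity
      refine lt_of_le_of_lt hle (lt_of_le_of_lt (mul_le_mul_right h2 _) ?_)
      rwa [mul_one]
    · rintro ⟨hTP', hr⟩
      have hTP : T * P = P := by rwa [← ContinuousLinearMap.mul_def] at hTP'
      have hG := spectrum.pow_nnnorm_pow_one_div_tendsto_nhds_spectralRadius (T - P)
      obtain ⟨m, hm1, hm2⟩ := ((eventually_ge_atTop 1).and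
        (hG.eventually_lt_const hr)).exists
      have hA : ‖(T - P) ^ m‖ < 1 := by
        by_contra hcon
        push_neg at hcon
        have h1le : (1 : ℝ≥0∞) ≤ (‖(T - P) ^ m‖₊ : ℝ≥0∞) := by
          rw [← ENNReal.coe_one, ENNReal.coe_le_coe]
          exact_mod_cast hcon
        have : (1 : ℝ≥0∞) ≤ ((‖(T - P) ^ m‖₊ : ℝ≥0∞)) ^ (1 / (m : ℝ)) := by
          calc (1 : ℝ≥0∞) = 1 ^ (1 / (m : ℝ)) := (ENNReal.one_rpow _).symm
            _ ≤ _ := ENNReal.rpow_le_rpow h1le (by positivity)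
        exact absurd hm2 (not_lt.mpr this)
      exact hi_of_small hTP ⟨m, hm1, hA⟩
end

section
/- Let X be a complex Banach space, T a bounded linear operator on X with ‖T‖ ≤ 1, and P a bounded projection (P ∘ P = P) on X with ‖P‖ ≤ 1 and PT = TP = P. If T is uniformly P-ergodic, then r(T − P) = sup{|λ| : λ ∈ σ(T), λ ≠ 1}, where the supremum over the empty set is taken to be 0. -/
open Filter Topology

theorem stmt1 {X : Type*} [NormedAddCommGroup X] [NormedSpace ℂ X] [CompleteSpace X]
    (T P : X →L[ℂ] X) (hT : ‖T‖ ≤ 1) (hPnorm : ‖P‖ ≤ 1)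
    (hProj : P.comp P = P) (hPT : P.comp T = P) (hTP : T.comp P = P)
    (hErg : Tendsto (fun n : ℕ => ‖T ^ n - P‖) atTop (𝓝 0)) :
    spectralRadius ℂ (T - P) = ⨆ μ ∈ (spectrum ℂ T \ {1}), (‖μ‖₊ : ENNReal) := by
  set A := T - P with hA
  have hPP : P * P = P := hProj
  have hPT' : P * T = P := hPT
  have hTP' : T * P = P := hTP
  -- product of perturbations of identity by P
  have hmul : ∀ c d : ℂ, (1 + c • P) * (1 + d • P) = 1 + (c + d + c * d) • P := by
    intro c d
    simp only [mul_add, add_mul, one_mul, mul_one, smul_mul_smul_comm, hPP]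
    module
  have hunit : ∀ c : ℂ, (1 : ℂ) + c ≠ 0 → IsUnit (1 + c • P) := by
    intro c hc
    have hcd : c + (-c / (1 + c)) + c * (-c / (1 + c)) = 0 := by
      field_simp; ring
    have hdc : (-c / (1 + c)) + c + (-c / (1 + c)) * c = 0 := by
      field_simp; ring
    exact ⟨⟨1 + c • P, 1 + (-c / (1 + c)) • P,
      by rw [hmul, hcd, zero_smul, add_zero],
      by rw [hmul, hdc, zero_smul, add_zero]⟩, rfl⟩
  have hAP : A * P = 0 := by rw [hA, sub_mul, hTP', hPP, sub_self]
  have hTPsm : T * P = P := hTP'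
  have expand : ∀ (B : X →L[ℂ] X) (l c : ℂ),
      (l • 1 - B) * (1 + c • P) = l • 1 + (l * c) • P - B - c • (B * P) := by
    intro B l c
    simp only [sub_mul, mul_add, mul_one, smul_mul_assoc, one_mul, mul_smul_comm, smul_smul]
    module
  -- factorization 1 : for λ ≠ 0, λ•1 - T = (λ•1 - A) * (1 + (-λ⁻¹) • P)
  have hfac1 : ∀ l : ℂ, l ≠ 0 → l • (1 : X →L[ℂ] X) - T = (l • 1 - A) * (1 + (-l⁻¹) • P) := by
    intro l hl
    rw [expand A l (-l⁻¹), hAP, smul_zero, sub_zero]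
    have hc : l * -l⁻¹ = -1 := by field_simp
    rw [hc, hA]
    module
  -- factorization 2 : for λ ≠ 1, λ•1 - A = (λ•1 - T) * (1 + (λ-1)⁻¹ • P)
  have hfac2 : ∀ l : ℂ, l ≠ 1 → l • (1 : X →L[ℂ] X) - A = (l • 1 - T) * (1 + (l - 1)⁻¹ • P) := by
    intro l hl
    have h1 : l - 1 ≠ 0 := sub_ne_zero.mpr hl
    rw [expand T l (l - 1)⁻¹, hTPsm]
    have hc : l * (l - 1)⁻¹ = 1 + (l - 1)⁻¹ := by field_simp; ring
    rw [hc, hA]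
    module
  have smul_eq_alg : ∀ l : ℂ, l • (1 : X →L[ℂ] X) = algebraMap ℂ (X →L[ℂ] X) l := by
    intro l; rw [Algebra.algebraMap_eq_smul_one]
  have mem1 : ∀ l : ℂ, l ∈ spectrum ℂ A → l ≠ 0 → l ≠ 1 → l ∈ spectrum ℂ T := by
    intro l hlA hl0 hl1
    rw [spectrum.mem_iff] at hlA ⊢
    intro hu
    apply hlA
    rw [← smul_eq_alg] at hu ⊢
    rw [hfac2 l hl1]
    refine hu.mul (hunit _ ?_)
    have h1 : l - 1 ≠ 0 := sub_ne_zero.mpr hl1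
    intro h
    apply hl0
    field_simp at h
    linear_combination h
  have mem2 : ∀ l : ℂ, l ∈ spectrum ℂ T → l ≠ 0 → l ≠ 1 → l ∈ spectrum ℂ A := by
    intro l hlT hl0 hl1
    rw [spectrum.mem_iff] at hlT ⊢
    intro hu
    apply hlT
    rw [← smul_eq_alg] at hu ⊢
    rw [hfac1 l hl0]
    refine hu.mul (hunit _ ?_)
    have h1 : l - 1 ≠ 0 := sub_ne_zero.mpr hl1
    intro h
    apply h1
    have h2 : l * (1 + -l⁻¹) = 0 := by rw [h, mul_zero]
    rw [mul_add, mul_one, mul_neg, mul_inv_cancel₀ hl0] at h2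
    linear_combination h2
  -- powers: A ^ (n+1) = T ^ (n+1) - P
  have hPTn : ∀ n : ℕ, P * T ^ n = P := by
    intro n
    induction n with
    | zero => simp
    | succ k ih => rw [pow_succ', ← mul_assoc, hPT', ih]
  have hTnP : ∀ n : ℕ, T ^ n * P = P := by
    intro n
    induction n with
    | zero => simp
    | succ k ih => rw [pow_succ, mul_assoc, hTP', ih]
  have hAn : ∀ n : ℕ, A ^ (n + 1) = T ^ (n + 1) - P := by
    intro n
    induction n with
    | zero => simp [hA]
    | succ k ih =>
      rw [pow_succ, ih, hA, sub_mul, mul_sub, mul_sub, hPT', hPP, hTnP, ← pow_succ]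
      abel
  -- spectral radius of A is < 1
  have hrad : spectralRadius ℂ A < 1 := by
    obtain ⟨N, hN⟩ := eventually_atTop.mp (hErg.eventually_lt_const one_pos)
    have hn1 : ‖A ^ (N + 1)‖₊ < 1 := by
      rw [hAn N]
      exact_mod_cast hN (N + 1) (Nat.le_succ N)
    calc spectralRadius ℂ A
        ≤ (‖A ^ (N + 1)‖₊ : ENNReal) ^ (1 / (N + 1) : ℝ) *
          (‖(1 : X →L[ℂ] X)‖₊ : ENNReal) ^ (1 / (N + 1) : ℝ) :=
          spectrum.spectralRadius_le_pow_nnnorm_pow_one_div ℂ A N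
      _ < 1 := by
          have hpos : (0 : ℝ) < 1 / (N + 1) := by positivity
          have h1 : (‖A ^ (N + 1)‖₊ : ENNReal) ^ (1 / (N + 1) : ℝ) < 1 :=
            ENNReal.rpow_lt_one (by exact_mod_cast hn1) hpos
          have h2 : (‖(1 : X →L[ℂ] X)‖₊ : ENNReal) ^ (1 / (N + 1) : ℝ) ≤ 1 := by
            apply ENNReal.rpow_le_one _ hpos.le
            exact_mod_cast ContinuousLinearMap.norm_id_le
          calc _ ≤ (‖A ^ (N + 1)‖₊ : ENNReal) ^ (1 / (N + 1) : ℝ) * 1 :=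
                mul_le_mul_right h2 _
            _ = _ := mul_one _
            _ < 1 := h1
  -- conclude
  rw [show spectralRadius ℂ A = ⨆ l ∈ spectrum ℂ A, (‖l‖₊ : ENNReal) from rfl] at hrad ⊢
  apply le_antisymm
  · refine iSup₂_le fun l hl => ?_
    by_cases hl0 : l = 0
    · simp [hl0]
    have hle : (‖l‖₊ : ENNReal) ≤ ⨆ l ∈ spectrum ℂ A, (‖l‖₊ : ENNReal) :=
      le_iSup₂ (f := fun μ (_ : μ ∈ spectrum ℂ A) => (‖μ‖₊ : ENNReal)) l hl
    have hl1 : l ≠ 1 := by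
      intro h
      rw [h] at hle
      simp only [nnnorm_one, ENNReal.coe_one] at hle
      exact absurd (lt_of_le_of_lt hle hrad) (lt_irrefl _)
    exact le_iSup₂ (f := fun μ (_ : μ ∈ spectrum ℂ T \ {1}) => (‖μ‖₊ : ENNReal)) l
      ⟨mem1 l hl hl0 hl1, hl1⟩
  · refine iSup₂_le fun l hl => ?_
    obtain ⟨hlT, hl1⟩ := hl
    by_cases hl0 : l = 0
    · simp [hl0]
    exact le_iSup₂ (f := fun μ (_ : μ ∈ spectrum ℂ A) => (‖μ‖₊ : ENNReal)) l (mem2 l hlT hl0 hl1)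
end

section
/- Let X be a strong abstract state space, P a Markov projection on X, and T a Markov operator on X with PT = TP and TP = P. Say that T satisfies condition 𝔇_P if there exist a constant τ ∈ (0,1], an integer n₀ ∈ ℕ, and a Markov projection Q on X with Q = QP = PQ, such that for every x ∈ K there exists φ_x ∈ X₊ with ‖φ_x‖ ≤ τ/4 and T^{n₀}x + φ_x − τ·Qx ∈ X₊. Then T satisfies condition 𝔇_P if and only if T is uniformly P-ergodic. -/
open Filter Topology

set_option maxHeartbeats 1000000 in
theorem stmt2 {X : Type*} [NormedAddCommGroup X] [NormedSpace ℝ X] [CompleteSpace X]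
    (C : Set X) (f : X →L[ℝ] ℝ)
    (hC_closed : IsClosed C)
    (hC_add : ∀ x ∈ C, ∀ y ∈ C, x + y ∈ C)
    (hC_smul : ∀ r : ℝ, 0 ≤ r → ∀ x ∈ C, r • x ∈ C)
    (hC_pointed : ∀ x ∈ C, -x ∈ C → x = 0)
    (hf_pos : ∀ x ∈ C, x ≠ 0 → 0 < f x)
    (hnorm : ∀ x : X, ‖x‖ = sInf {r : ℝ | ∃ y ∈ C, ∃ z ∈ C, x = y - z ∧ r = f y + f z})
    (hstrong : ∀ x : X, ∃ y ∈ C, ∃ z ∈ C, x = y - z ∧ ‖x‖ = f y + f z)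
    (T P : X →L[ℝ] X)
    (hT_pos : ∀ x ∈ C, T x ∈ C) (hT_f : ∀ x, f (T x) = f x)
    (hP_pos : ∀ x ∈ C, P x ∈ C) (hP_f : ∀ x, f (P x) = f x)
    (hP_proj : P.comp P = P)
    (hComm : P.comp T = T.comp P) (hTP : T.comp P = P) :
    (∃ τ : ℝ, 0 < τ ∧ τ ≤ 1 ∧ ∃ n₀ : ℕ, ∃ Q : X →L[ℝ] X,
      (∀ x ∈ C, Q x ∈ C) ∧ (∀ x, f (Q x) = f x) ∧ Q.comp Q = Q ∧
      Q = Q.comp P ∧ Q = P.comp Q ∧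
      ∀ x ∈ C, f x = 1 → ∃ φ ∈ C, ‖φ‖ ≤ τ / 4 ∧ (T ^ n₀) x + φ - τ • Q x ∈ C) ↔
    Tendsto (fun n : ℕ => ‖T ^ n - P‖) atTop (𝓝 0) := by
  -- Shared elementary facts
  have hzero : (0 : X) ∈ C := by
    obtain ⟨y, hy, -⟩ := hstrong 0
    simpa using hC_smul 0 le_rfl y hy
  have hfnn : ∀ x ∈ C, 0 ≤ f x := by
    intro x hx
    rcases eq_or_ne x 0 with rfl | hne
    · simp
    · exact (hf_pos x hx hne).le
  have hfz : ∀ x ∈ C, f x = 0 → x = 0 := by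
    intro x hx h0
    by_contra hne
    exact absurd h0 (ne_of_gt (hf_pos x hx hne))
  have hbdd : ∀ x : X, BddBelow {r : ℝ | ∃ y ∈ C, ∃ z ∈ C, x = y - z ∧ r = f y + f z} := by
    intro x
    refine ⟨0, ?_⟩
    rintro r ⟨y, hy, z, hz, -, rfl⟩
    have h1 := hfnn y hy; have h2 := hfnn z hz; linarith
  have hnorm_le : ∀ (x y z : X), y ∈ C → z ∈ C → x = y - z → ‖x‖ ≤ f y + f z := by
    intro x y z hy hz hxyz
    rw [hnorm x]
    exact csInf_le (hbdd x) ⟨y, hy, z, hz, hxyz, rfl⟩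
  have hnormC : ∀ x ∈ C, ‖x‖ = f x := by
    intro x hx
    refine le_antisymm ?_ ?_
    · have := hnorm_le x x 0 hx hzero (by simp)
      simpa using this
    · rw [hnorm x]
      refine le_csInf ⟨f x + f 0, x, hx, 0, hzero, by simp, rfl⟩ ?_
      rintro r ⟨y, hy, z, hz, hxyz, rfl⟩
      have hfy : f x = f y - f z := by rw [hxyz, map_sub]
      have := hfnn z hz
      linarith
  have hcontr : ∀ (S : X →L[ℝ] X), (∀ x ∈ C, S x ∈ C) → (∀ x, f (S x) = f x) →
      ∀ x : X, ‖S x‖ ≤ ‖x‖ := by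
    intro S hSpos hSf x
    obtain ⟨y, hy, z, hz, hxyz, hxn⟩ := hstrong x
    have hSx : S x = S y - S z := by rw [hxyz, map_sub]
    calc ‖S x‖ ≤ f (S y) + f (S z) := hnorm_le _ _ _ (hSpos y hy) (hSpos z hz) hSx
      _ = ‖x‖ := by rw [hSf, hSf, hxn]
  have hTn : ∀ n : ℕ, (∀ x ∈ C, (T ^ n) x ∈ C) ∧ ∀ x, f ((T ^ n) x) = f x := by
    intro n
    induction n with
    | zero => simp
    | succ k ih =>
      constructor
      · intro x hx
        rw [pow_succ, ContinuousLinearMap.mul_apply]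
        exact ih.1 _ (hT_pos x hx)
      · intro x
        rw [pow_succ, ContinuousLinearMap.mul_apply, ih.2, hT_f]
  have hPTpt : ∀ x : X, P (T x) = T (P x) := by
    intro x
    have := DFunLike.congr_fun hComm x
    simpa using this
  have hTPpt : ∀ x : X, T (P x) = P x := by
    intro x
    have := DFunLike.congr_fun hTP x
    simpa using this
  have hPPpt : ∀ x : X, P (P x) = P x := by
    intro x
    have := DFunLike.congr_fun hP_proj x
    simpa using this
  have hPTn : ∀ (n : ℕ) (x : X), P ((T ^ n) x) = (T ^ n) (P x) := by
    intro n
    induction n with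
    | zero => simp
    | succ k ih =>
      intro x
      rw [pow_succ, ContinuousLinearMap.mul_apply, ContinuousLinearMap.mul_apply,
        ih, hPTpt]
  have hTnP : ∀ (n : ℕ) (x : X), (T ^ n) (P x) = P x := by
    intro n
    induction n with
    | zero => simp
    | succ k ih =>
      intro x
      rw [pow_succ, ContinuousLinearMap.mul_apply, hTPpt, ih]
  constructor
  · rintro ⟨τ, hτ0, hτ1, n₀, Q, hQpos, hQf, hQproj, hQP, hPQ, hcond⟩
    set ρ : ℝ := 1 - τ / 2 with hρ
    have hρ0 : 0 ≤ ρ := by rw [hρ]; linarith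
    have hρ1 : ρ < 1 := by rw [hρ]; linarith
    -- Key estimate from the condition 𝔇_P
    have hkey : ∀ x : X, P x = 0 → ‖(T ^ n₀) x‖ ≤ ρ * ‖x‖ := by
      intro x hx
      obtain ⟨y, hy, z, hz, hxyz, hxn⟩ := hstrong x
      have hfx : f x = 0 := by
        have := hP_f x
        rw [hx, map_zero] at this
        exact this.symm
      have hfyz : f y = f z := by
        have : f x = f y - f z := by rw [hxyz, map_sub]
        linarith [this ▸ hfx]
      rcases eq_or_lt_of_le (hfnn y hy) with ha | ha
      · -- degenerate case: x = 0
        have hy0 : y = 0 := hfz y hy ha.symm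
        have hz0 : z = 0 := hfz z hz (by rw [← hfyz]; exact ha.symm)
        have hx0 : x = 0 := by rw [hxyz, hy0, hz0, sub_zero]
        simp [hx0]
      · set a : ℝ := f y with haa
        have hane : a ≠ 0 := ne_of_gt ha
        set u : X := a⁻¹ • y with hu
        set v : X := a⁻¹ • z with hv
        have hau : a • u = y := by rw [hu, smul_inv_smul₀ hane]
        have hav : a • v = z := by rw [hv, smul_inv_smul₀ hane]
        have huC : u ∈ C := hC_smul _ (inv_nonneg.2 ha.le) y hy
        have hvC : v ∈ C := hC_smul _ (inv_nonneg.2 ha.le) z hz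
        have hfu : f u = 1 := by
          rw [hu, map_smul, smul_eq_mul, inv_mul_cancel₀ hane]
        have hfv : f v = 1 := by
          rw [hv, map_smul, smul_eq_mul, ← hfyz, inv_mul_cancel₀ hane]
        obtain ⟨φu, hφuC, hφun, hAu⟩ := hcond u huC hfu
        obtain ⟨φv, hφvC, hφvn, hAv⟩ := hcond v hvC hfv
        set A : X := (T ^ n₀) u + φu - τ • Q u with hA
        set B : X := (T ^ n₀) v + φv - τ • Q v with hB
        have hQuv : Q u = Q v := by
          have h1 : Q (u - v) = Q (P (u - v)) := by
            rw [← ContinuousLinearMap.comp_apply, ← hQP]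
          have h2 : P (u - v) = 0 := by
            have : u - v = a⁻¹ • x := by rw [hxyz, smul_sub, ← hu, ← hv]
            rw [this, map_smul, hx, smul_zero]
          have := h1
          rw [h2, map_zero, map_sub, sub_eq_zero] at this
          exact this
        have hAB : A - B = (T ^ n₀) u - (T ^ n₀) v + (φu - φv) := by
          rw [hA, hB, hQuv]; abel
        have hauv : a • (u - v) = x := by rw [smul_sub, hau, hav, hxyz]
        have hxform : (T ^ n₀) x = a • (A - B) + a • (φv - φu) := by
          rw [hAB, ← hauv, map_smul, map_sub, smul_add, smul_sub, smul_sub, smul_sub]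
          abel
        have hφuN : ‖φu‖ = f φu := hnormC φu hφuC
        have hφvN : ‖φv‖ = f φv := hnormC φv hφvC
        have hfA : f A ≤ 1 - 3 * τ / 4 := by
          have : f A = f ((T ^ n₀) u) + f φu - τ * f (Q u) := by
            simp only [hA, map_sub, map_add, map_smul, smul_eq_mul]
          rw [this, (hTn n₀).2, hfu, hQf, hfu]
          have : f φu ≤ τ / 4 := hφuN ▸ hφun
          linarith
        have hfB : f B ≤ 1 - 3 * τ / 4 := by
          have : f B = f ((T ^ n₀) v) + f φv - τ * f (Q v) := by
            simp only [hB, map_sub, map_add, map_smul, smul_eq_mul]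
          rw [this, (hTn n₀).2, hfv, hQf, hfv]
          have : f φv ≤ τ / 4 := hφvN ▸ hφvn
          linarith
        have hABn : ‖A - B‖ ≤ f A + f B := hnorm_le _ _ _ hAu hAv rfl
        have hxnval : ‖x‖ = 2 * a := by rw [hxn, ← hfyz]; ring
        have hest : ‖(T ^ n₀) x‖ ≤ a * (2 - τ) := by
          have h1 : ‖(T ^ n₀) x‖ ≤ ‖a • (A - B)‖ + ‖a • (φv - φu)‖ := by
            rw [hxform]; exact norm_add_le _ _
          have h2 : ‖a • (A - B)‖ = a * ‖A - B‖ := by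
            rw [norm_smul, Real.norm_eq_abs, abs_of_pos ha]
          have h3 : ‖a • (φv - φu)‖ ≤ a * (τ / 4 + τ / 4) := by
            rw [norm_smul, Real.norm_eq_abs, abs_of_pos ha]
            have : ‖φv - φu‖ ≤ ‖φv‖ + ‖φu‖ := norm_sub_le _ _
            have hb : ‖φv - φu‖ ≤ τ / 4 + τ / 4 := by linarith
            exact mul_le_mul_of_nonneg_left hb ha.le
          have h4 : ‖A - B‖ ≤ 2 - 3 * τ / 2 := by linarith
          nlinarith [ha.le]
        rw [hxnval, hρ]
        calc ‖(T ^ n₀) x‖ ≤ a * (2 - τ) := hest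
          _ = (1 - τ / 2) * (2 * a) := by ring
    -- upgrade to a positive exponent
    obtain ⟨n₁, hn₁pos, hkey1⟩ : ∃ n₁ : ℕ, 0 < n₁ ∧ ∀ x : X, P x = 0 →
        ‖(T ^ n₁) x‖ ≤ ρ * ‖x‖ := by
      rcases Nat.eq_zero_or_pos n₀ with h0 | hpos
      · refine ⟨1, one_pos, ?_⟩
        intro x hx
        have := hkey x hx
        rw [h0, pow_zero] at this
        have hx0 : x = 0 := by
          have hxn : ‖x‖ ≤ 0 := by
            simp only [ContinuousLinearMap.one_apply] at this
            nlinarith [norm_nonneg x]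
          exact norm_le_zero_iff.mp hxn
        simp [hx0]
      · exact ⟨n₀, hpos, hkey⟩
    -- iterate
    have hiter : ∀ (k : ℕ) (x : X), P x = 0 → ‖(T ^ (n₁ * k)) x‖ ≤ ρ ^ k * ‖x‖ := by
      intro k
      induction k with
      | zero => intro x hx; simp
      | succ m ih =>
        intro x hx
        have hsplit : (T ^ (n₁ * (m + 1))) x = (T ^ (n₁ * m)) ((T ^ n₁) x) := by
          rw [show n₁ * (m + 1) = n₁ * m + n₁ by ring, pow_add,
            ContinuousLinearMap.mul_apply]
        have hPx : P ((T ^ n₁) x) = 0 := by rw [hPTn, hx, map_zero]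
        calc ‖(T ^ (n₁ * (m + 1))) x‖ = ‖(T ^ (n₁ * m)) ((T ^ n₁) x)‖ := by rw [hsplit]
          _ ≤ ρ ^ m * ‖(T ^ n₁) x‖ := ih _ hPx
          _ ≤ ρ ^ m * (ρ * ‖x‖) :=
            mul_le_mul_of_nonneg_left (hkey1 x hx) (pow_nonneg hρ0 m)
          _ = ρ ^ (m + 1) * ‖x‖ := by ring
    -- general bound on operator norm
    have hbound : ∀ n : ℕ, ‖T ^ n - P‖ ≤ 2 * ρ ^ (n / n₁) := by
      intro n
      refine ContinuousLinearMap.opNorm_le_bound _ (by positivity) ?_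
      intro x
      have hPx0 : P (x - P x) = 0 := by rw [map_sub, hPPpt, sub_self]
      have happ : (T ^ n - P) x = (T ^ n) (x - P x) := by
        rw [map_sub, hTnP]
        simp
      have hndecomp : n = n₁ * (n / n₁) + n % n₁ := (Nat.div_add_mod n n₁).symm
      have hsplit : (T ^ n) (x - P x) = (T ^ (n₁ * (n / n₁))) ((T ^ (n % n₁)) (x - P x)) := by
        conv_lhs => rw [hndecomp]
        rw [pow_add, ContinuousLinearMap.mul_apply]
      have hPmid : P ((T ^ (n % n₁)) (x - P x)) = 0 := by
        rw [hPTn, hPx0, map_zero]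
      have hcr : ‖(T ^ (n % n₁)) (x - P x)‖ ≤ ‖x - P x‖ :=
        hcontr _ (hTn _).1 (hTn _).2 _
      have hxP : ‖x - P x‖ ≤ 2 * ‖x‖ := by
        have := hcontr P hP_pos hP_f x
        calc ‖x - P x‖ ≤ ‖x‖ + ‖P x‖ := norm_sub_le _ _
          _ ≤ 2 * ‖x‖ := by linarith
      calc ‖(T ^ n - P) x‖ = ‖(T ^ (n₁ * (n / n₁))) ((T ^ (n % n₁)) (x - P x))‖ := by
            rw [happ, hsplit]
        _ ≤ ρ ^ (n / n₁) * ‖(T ^ (n % n₁)) (x - P x)‖ := hiter _ _ hPmid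
        _ ≤ ρ ^ (n / n₁) * (2 * ‖x‖) :=
            mul_le_mul_of_nonneg_left (le_trans hcr hxP) (pow_nonneg hρ0 _)
        _ = 2 * ρ ^ (n / n₁) * ‖x‖ := by ring
    -- conclude
    have hdivtop : Tendsto (fun n : ℕ => n / n₁) atTop atTop := by
      apply tendsto_atTop_atTop.mpr
      intro b
      exact ⟨b * n₁, fun n hn => (Nat.le_div_iff_mul_le hn₁pos).mpr hn⟩
    have hpowtend : Tendsto (fun n : ℕ => 2 * ρ ^ (n / n₁)) atTop (𝓝 0) := by
      have h1 : Tendsto (fun k : ℕ => ρ ^ k) atTop (𝓝 0) :=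
        tendsto_pow_atTop_nhds_zero_of_lt_one hρ0 hρ1
      have := (h1.comp hdivtop).const_mul 2
      simpa using this
    exact squeeze_zero (fun n => norm_nonneg _) hbound hpowtend
  · intro h
    -- pick n₀ with ‖T^n₀ - P‖ ≤ 1/4
    obtain ⟨n₀, hn₀⟩ : ∃ n, ‖T ^ n - P‖ < 1 / 4 := by
      have := Metric.tendsto_atTop.mp h (1 / 4) (by norm_num)
      obtain ⟨N, hN⟩ := this
      refine ⟨N, ?_⟩
      have := hN N le_rfl
      rw [Real.dist_eq, sub_zero] at this
      calc ‖T ^ N - P‖ ≤ |‖T ^ N - P‖| := le_abs_self _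
        _ < 1 / 4 := this
    refine ⟨1, one_pos, le_rfl, n₀, P, hP_pos, hP_f, hP_proj, hP_proj.symm, hP_proj.symm, ?_⟩
    intro x hx hfx1
    set d : X := (T ^ n₀) x - P x with hd
    have hxn : ‖x‖ = 1 := by rw [hnormC x hx, hfx1]
    have hdn : ‖d‖ ≤ 1 / 4 := by
      have h1 : d = (T ^ n₀ - P) x := by rw [hd]; simp
      calc ‖d‖ = ‖(T ^ n₀ - P) x‖ := by rw [h1]
        _ ≤ ‖T ^ n₀ - P‖ * ‖x‖ := (T ^ n₀ - P).le_opNorm x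
        _ ≤ 1 / 4 := by rw [hxn, mul_one]; exact hn₀.le
    obtain ⟨y, hy, z, hz, hdyz, hdn'⟩ := hstrong d
    refine ⟨z, hz, ?_, ?_⟩
    · have hfzn : f z ≤ ‖d‖ := by
        have := hfnn y hy
        linarith [hdn']
      rw [hnormC z hz]
      calc f z ≤ ‖d‖ := hfzn
        _ ≤ 1 / 4 := hdn
        _ = 1 / 4 := rfl
    · have : (T ^ n₀) x + z - (1 : ℝ) • P x = y := by
        rw [one_smul]
        calc (T ^ n₀) x + z - P x = ((T ^ n₀) x - P x) + z := by abel
          _ = (y - z) + z := by rw [← hd, hdyz]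
          _ = y := by abel
      rw [this]
      exact hy
end

section
/- Let X be a strong abstract state space, P a Markov projection on X, and T a Markov operator on X with PT = TP and TP = P. Suppose there exist a constant λ ∈ (1/2, 1], an integer n₀ ∈ ℕ, and a Markov projection Q on X with Q = QP = PQ, such that for every x ∈ K there exists u_x ∈ X₊ with ‖u_x‖ ≥ λ, T^{n₀}x − u_x ∈ X₊, and Qx − u_x ∈ X₊. Then T is uniformly P-ergodic. -/
open Filter Topology

theorem stmt3 {X : Type*} [NormedAddCommGroup X] [NormedSpace ℝ X] [CompleteSpace X]
    (C : Set X) (f : X →L[ℝ] ℝ)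
    (hC_closed : IsClosed C)
    (hC_add : ∀ x ∈ C, ∀ y ∈ C, x + y ∈ C)
    (hC_smul : ∀ r : ℝ, 0 ≤ r → ∀ x ∈ C, r • x ∈ C)
    (hC_pointed : ∀ x ∈ C, -x ∈ C → x = 0)
    (hf_pos : ∀ x ∈ C, x ≠ 0 → 0 < f x)
    (hnorm : ∀ x : X, ‖x‖ = sInf {r : ℝ | ∃ y ∈ C, ∃ z ∈ C, x = y - z ∧ r = f y + f z})
    (hstrong : ∀ x : X, ∃ y ∈ C, ∃ z ∈ C, x = y - z ∧ ‖x‖ = f y + f z)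
    (T P : X →L[ℝ] X)
    (hT_pos : ∀ x ∈ C, T x ∈ C) (hT_f : ∀ x, f (T x) = f x)
    (hP_pos : ∀ x ∈ C, P x ∈ C) (hP_f : ∀ x, f (P x) = f x)
    (hP_proj : P.comp P = P)
    (hComm : P.comp T = T.comp P) (hTP : T.comp P = P)
    (hD : ∃ lam : ℝ, 1 / 2 < lam ∧ lam ≤ 1 ∧ ∃ n₀ : ℕ, ∃ Q : X →L[ℝ] X,
      (∀ x ∈ C, Q x ∈ C) ∧ (∀ x, f (Q x) = f x) ∧ Q.comp Q = Q ∧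
      Q = Q.comp P ∧ Q = P.comp Q ∧
      ∀ x ∈ C, f x = 1 → ∃ u ∈ C, lam ≤ ‖u‖ ∧ (T ^ n₀) x - u ∈ C ∧ Q x - u ∈ C) :
    Tendsto (fun n : ℕ => ‖T ^ n - P‖) atTop (𝓝 0) := by
  obtain ⟨lam, hlam1, hlam2, n₀, Q, hQ_pos, hQ_f, hQ_proj, hQP, hPQ, hKey⟩ := hD
  -- 0 ∈ C
  obtain ⟨y0, hy0, z0, hz0, -, -⟩ := hstrong 0
  have h0C : (0:X) ∈ C := by simpa using hC_smul 0 le_rfl y0 hy0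
  have hf_nn : ∀ x ∈ C, 0 ≤ f x := by
    intro x hx
    rcases eq_or_ne x 0 with h|h
    · simp [h]
    · exact (hf_pos x hx h).le
  have hbdd : ∀ x : X, BddBelow {r : ℝ | ∃ y ∈ C, ∃ z ∈ C, x = y - z ∧ r = f y + f z} := by
    intro x
    refine ⟨0, ?_⟩
    rintro r ⟨y, hy, z, hz, -, rfl⟩
    exact add_nonneg (hf_nn y hy) (hf_nn z hz)
  have hle : ∀ x : X, ∀ y ∈ C, ∀ z ∈ C, x = y - z → ‖x‖ ≤ f y + f z := by
    intro x y hy z hz hxyz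
    rw [hnorm x]
    exact csInf_le (hbdd x) ⟨y, hy, z, hz, hxyz, rfl⟩
  have hnormC : ∀ x ∈ C, ‖x‖ = f x := by
    intro x hx
    apply le_antisymm
    · have := hle x x hx 0 h0C (by simp)
      simpa using this
    · rw [hnorm x]
      obtain ⟨y, hy, z, hz, hxyz, hsum⟩ := hstrong x
      refine le_csInf ⟨_, y, hy, z, hz, hxyz, rfl⟩ ?_
      rintro r ⟨y', hy', z', hz', rfl, rfl⟩
      have h1 : f (y' - z') = f y' - f z' := by simp
      have := hf_nn z' hz'
      linarith
  -- contraction property of Markov operators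
  have hcontr : ∀ (S : X →L[ℝ] X), (∀ x ∈ C, S x ∈ C) → (∀ x, f (S x) = f x) →
      ∀ x : X, ‖S x‖ ≤ ‖x‖ := by
    intro S hS hSf x
    obtain ⟨y, hy, z, hz, rfl, hsum⟩ := hstrong x
    have h := hle (S (y - z)) (S y) (hS y hy) (S z) (hS z hz) (by simp)
    rw [hSf, hSf] at h
    linarith
  -- powers of T
  have hTn_pos : ∀ n : ℕ, ∀ x ∈ C, (T ^ n) x ∈ C := by
    intro n
    induction n with
    | zero => intro x hx; simpa using hx
    | succ n ih =>
        intro x hx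
        have : (T ^ (n+1)) x = (T ^ n) (T x) := by
          rw [pow_succ]; rfl
        rw [this]
        exact ih _ (hT_pos x hx)
  have hTn_f : ∀ n : ℕ, ∀ x : X, f ((T ^ n) x) = f x := by
    intro n
    induction n with
    | zero => intro x; simp
    | succ n ih =>
        intro x
        have : (T ^ (n+1)) x = (T ^ n) (T x) := by rw [pow_succ]; rfl
        rw [this, ih, hT_f]
  have hTn_contr : ∀ n : ℕ, ∀ x : X, ‖(T ^ n) x‖ ≤ ‖x‖ := by
    intro n
    induction n with
    | zero => intro x; simp
    | succ n ih =>
        intro x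
        have h1 : (T ^ (n+1)) x = (T ^ n) (T x) := by rw [pow_succ]; rfl
        rw [h1]
        exact le_trans (ih (T x)) (hcontr T hT_pos hT_f x)
  have hTPx : ∀ x : X, T (P x) = P x := by
    intro x
    have := congrArg (fun (S : X →L[ℝ] X) => S x) hTP
    simpa using this
  have hPTx : ∀ x : X, P (T x) = T (P x) := by
    intro x
    have := congrArg (fun (S : X →L[ℝ] X) => S x) hComm
    simpa using this
  have hTnP : ∀ n : ℕ, ∀ x : X, (T ^ n) (P x) = P x := by
    intro n
    induction n with
    | zero => intro x; simp
    | succ n ih =>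
        intro x
        have h1 : (T ^ (n+1)) (P x) = (T ^ n) (T (P x)) := by rw [pow_succ]; rfl
        rw [h1, hTPx, ih]
  have hPTn : ∀ n : ℕ, ∀ x : X, P ((T ^ n) x) = (T ^ n) (P x) := by
    intro n
    induction n with
    | zero => intro x; simp
    | succ n ih =>
        intro x
        have h1 : (T ^ (n+1)) x = (T ^ n) (T x) := by rw [pow_succ]; rfl
        have h2 : (T ^ (n+1)) (P x) = (T ^ n) (T (P x)) := by rw [pow_succ]; rfl
        rw [h1, h2, ih, hPTx]
  set ρ : ℝ := 2 * (1 - lam) with hρdef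
  have hρ0 : 0 ≤ ρ := by simp [hρdef]; linarith
  have hρ1 : ρ < 1 := by simp [hρdef]; linarith
  -- the key estimate
  have hmain : ∀ x : X, P x = 0 → ‖(T ^ n₀) x‖ ≤ ρ * ‖x‖ := by
    intro x hPx
    rcases eq_or_ne x 0 with rfl|hx0
    · simp
    have hfx : f x = 0 := by rw [← hP_f x, hPx, map_zero]
    obtain ⟨y, hy, z, hz, hxyz, hsum⟩ := hstrong x
    have hfyz : f y = f z := by
      have h1 : f x = f y - f z := by rw [hxyz]; simp
      linarith
    have hxnorm_pos : 0 < ‖x‖ := norm_pos_iff.mpr hx0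
    have hcpos : 0 < f y := by linarith
    set c : ℝ := f y with hc
    have hyC : c⁻¹ • y ∈ C := hC_smul _ (inv_nonneg.mpr hcpos.le) y hy
    have hzC : c⁻¹ • z ∈ C := hC_smul _ (inv_nonneg.mpr hcpos.le) z hz
    have hfy1 : f (c⁻¹ • y) = 1 := by
      rw [map_smul]
      rw [smul_eq_mul]; exact inv_mul_cancel₀ hcpos.ne'
    have hfz1 : f (c⁻¹ • z) = 1 := by
      rw [map_smul]
      rw [← hfyz]
      rw [smul_eq_mul]; exact inv_mul_cancel₀ hcpos.ne'
    obtain ⟨u₁, hu₁C, hu₁l, hTu₁, hQu₁⟩ := hKey _ hyC hfy1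
    obtain ⟨u₂, hu₂C, hu₂l, hTu₂, hQu₂⟩ := hKey _ hzC hfz1
    have hfu₁ : lam ≤ f u₁ := by rw [← hnormC u₁ hu₁C]; exact hu₁l
    have hfu₂ : lam ≤ f u₂ := by rw [← hnormC u₂ hu₂C]; exact hu₂l
    have hQx : Q x = 0 := by
      have := congrArg (fun (S : X →L[ℝ] X) => S x) hQP
      simp at this
      rw [this, hPx, map_zero]
    have hQeq : Q (c⁻¹ • y) = Q (c⁻¹ • z) := by
      have h1 : Q y - Q z = 0 := by rw [← map_sub, ← hxyz, hQx]
      have h2 : Q y = Q z := by rwa [sub_eq_zero] at h1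
      rw [map_smul, map_smul, h2]
    set A : X := ((T ^ n₀) (c⁻¹ • y) - u₁) + (Q (c⁻¹ • z) - u₂) with hA
    set B : X := ((T ^ n₀) (c⁻¹ • z) - u₂) + (Q (c⁻¹ • y) - u₁) with hB
    have hAC : A ∈ C := hC_add _ hTu₁ _ hQu₂
    have hBC : B ∈ C := hC_add _ hTu₂ _ hQu₁
    have hdiff : (T ^ n₀) x = c • (A - B) := by
      have h1 : A - B = (T ^ n₀) (c⁻¹ • y) - (T ^ n₀) (c⁻¹ • z) := by
        rw [hA, hB, hQeq]; abel
      rw [h1, ← map_sub, ← smul_sub, ← hxyz, map_smul, smul_smul,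
        mul_inv_cancel₀ hcpos.ne', one_smul]
    have hAB : ‖A - B‖ ≤ f A + f B := hle _ _ hAC _ hBC rfl
    have hfTy : f ((T ^ n₀) (c⁻¹ • y)) = 1 := by rw [hTn_f, hfy1]
    have hfTz : f ((T ^ n₀) (c⁻¹ • z)) = 1 := by rw [hTn_f, hfz1]
    have hfQy : f (Q (c⁻¹ • y)) = 1 := by rw [hQ_f, hfy1]
    have hfQz : f (Q (c⁻¹ • z)) = 1 := by rw [hQ_f, hfz1]
    have hfA : f A ≤ ρ := by
      have : f A = f ((T ^ n₀) (c⁻¹ • y)) - f u₁ + (f (Q (c⁻¹ • z)) - f u₂) := by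
        rw [hA]; simp
      rw [this, hfTy, hfQz, hρdef]
      linarith
    have hfB : f B ≤ ρ := by
      have : f B = f ((T ^ n₀) (c⁻¹ • z)) - f u₂ + (f (Q (c⁻¹ • y)) - f u₁) := by
        rw [hB]; simp
      rw [this, hfTz, hfQy, hρdef]
      linarith
    have hxc : ‖x‖ = 2 * c := by rw [hsum, ← hfyz]; ring
    calc ‖(T ^ n₀) x‖ = c * ‖A - B‖ := by
          rw [hdiff, norm_smul, Real.norm_eq_abs, abs_of_pos hcpos]
      _ ≤ c * (f A + f B) := by
          exact mul_le_mul_of_nonneg_left hAB hcpos.le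
      _ ≤ c * (ρ + ρ) := by
          apply mul_le_mul_of_nonneg_left _ hcpos.le
          linarith
      _ = ρ * (2 * c) := by ring
      _ = ρ * ‖x‖ := by rw [hxc]
  -- extend to m := max n₀ 1
  set m : ℕ := max n₀ 1 with hm
  have hm1 : 1 ≤ m := le_max_right _ _
  have hmain' : ∀ x : X, P x = 0 → ‖(T ^ m) x‖ ≤ ρ * ‖x‖ := by
    intro x hPx
    have h1 : (T ^ m) x = (T ^ (m - n₀)) ((T ^ n₀) x) := by
      have hmn : m = (m - n₀) + n₀ := (Nat.sub_add_cancel (le_max_left _ _)).symm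
      conv_lhs => rw [hmn, pow_add]
      rfl
    rw [h1]
    exact le_trans (hTn_contr _ _) (hmain x hPx)
  -- iterate
  have hiter : ∀ q : ℕ, ∀ x : X, P x = 0 → ‖(T ^ (m * q)) x‖ ≤ ρ ^ q * ‖x‖ := by
    intro q
    induction q with
    | zero => intro x hPx; simp
    | succ q ih =>
        intro x hPx
        have h1 : (T ^ (m * (q+1))) x = (T ^ (m * q)) ((T ^ m) x) := by
          rw [Nat.mul_succ, pow_add]; rfl
        have hPTm : P ((T ^ m) x) = 0 := by rw [hPTn, hPx, map_zero]
        rw [h1]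
        calc ‖(T ^ (m * q)) ((T ^ m) x)‖ ≤ ρ ^ q * ‖(T ^ m) x‖ := ih _ hPTm
          _ ≤ ρ ^ q * (ρ * ‖x‖) := by
              exact mul_le_mul_of_nonneg_left (hmain' x hPx) (pow_nonneg hρ0 q)
          _ = ρ ^ (q+1) * ‖x‖ := by ring
  -- operator norm bound
  have hbound : ∀ n : ℕ, ‖T ^ n - P‖ ≤ 2 * ρ ^ (n / m) := by
    intro n
    apply ContinuousLinearMap.opNorm_le_bound
    · positivity
    intro x
    have hker : P (x - P x) = 0 := by
      have := congrArg (fun (S : X →L[ℝ] X) => S x) hP_proj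
      simp at this
      simp [map_sub, this]
    have h1 : (T ^ n - P) x = (T ^ n) (x - P x) := by
      simp [map_sub, hTnP n x]
    have h2 : (T ^ n) (x - P x) = (T ^ (m * (n / m))) ((T ^ (n % m)) (x - P x)) := by
      conv_lhs => rw [← Nat.div_add_mod n m]
      rw [pow_add]; rfl
    have hkerr : P ((T ^ (n % m)) (x - P x)) = 0 := by rw [hPTn, hker, map_zero]
    have h3 : ‖(T ^ n - P) x‖ ≤ ρ ^ (n / m) * ‖(T ^ (n % m)) (x - P x)‖ := by
      rw [h1, h2]
      exact hiter _ _ hkerr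
    have h4 : ‖(T ^ (n % m)) (x - P x)‖ ≤ ‖x - P x‖ := hTn_contr _ _
    have h5 : ‖x - P x‖ ≤ 2 * ‖x‖ := by
      calc ‖x - P x‖ ≤ ‖x‖ + ‖P x‖ := norm_sub_le _ _
        _ ≤ ‖x‖ + ‖x‖ := by linarith [hcontr P hP_pos hP_f x]
        _ = 2 * ‖x‖ := by ring
    calc ‖(T ^ n - P) x‖ ≤ ρ ^ (n / m) * ‖(T ^ (n % m)) (x - P x)‖ := h3
      _ ≤ ρ ^ (n / m) * (2 * ‖x‖) := by
          exact mul_le_mul_of_nonneg_left (le_trans h4 h5) (pow_nonneg hρ0 _)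
      _ = 2 * ρ ^ (n / m) * ‖x‖ := by ring
  -- conclude
  have hdiv : Tendsto (fun n : ℕ => n / m) atTop atTop := by
    apply tendsto_atTop_atTop.mpr
    intro b
    refine ⟨b * m, fun n hn => ?_⟩
    exact (Nat.le_div_iff_mul_le (by omega)).mpr hn
  have htend : Tendsto (fun n : ℕ => 2 * ρ ^ (n / m)) atTop (𝓝 0) := by
    have h0 : Tendsto (fun q : ℕ => ρ ^ q) atTop (𝓝 0) :=
      tendsto_pow_atTop_nhds_zero_of_lt_one hρ0 hρ1
    have := (h0.comp hdiv).const_mul (2:ℝ)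
    simpa using this
  refine squeeze_zero (fun n => norm_nonneg _) hbound htend
end

section
/- Let X be a complex Banach space, T a bounded linear operator on X with ‖T‖ ≤ 1, and P a bounded projection (P ∘ P = P) on X with ‖P‖ ≤ 1 and PT = TP = P. If δ_P(T^{n₀}) < 1 for some n₀ ∈ ℕ, then r(T − P) < 1. -/
open Filter Topology

theorem stmt5 {X : Type*} [NormedAddCommGroup X] [NormedSpace ℂ X] [CompleteSpace X]
    (T P : X →L[ℂ] X) (hT : ‖T‖ ≤ 1) (hPnorm : ‖P‖ ≤ 1)
    (hProj : P.comp P = P) (hPT : P.comp T = P) (hTP : T.comp P = P)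
    (h : ∃ n₀ : ℕ, dobrushinCoeff P (T ^ n₀) < 1) :
    spectralRadius ℂ (T - P) < 1 := by
  obtain ⟨n₀, hδ⟩ := h
  set δ := dobrushinCoeff P (T ^ n₀) with hδdef
  set S : Set ℝ := {r : ℝ | ∃ x : X, P x = 0 ∧ ‖x‖ ≤ 1 ∧ r = ‖(T ^ n₀) x‖} with hS
  have hbdd : BddAbove S := by
    refine ⟨‖T ^ n₀‖, ?_⟩
    rintro r ⟨x, -, hx1, rfl⟩
    calc ‖(T ^ n₀) x‖ ≤ ‖T ^ n₀‖ * ‖x‖ := (T ^ n₀).le_opNorm x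
    _ ≤ ‖T ^ n₀‖ * 1 := by
        exact mul_le_mul_of_nonneg_left hx1 (norm_nonneg _)
    _ = ‖T ^ n₀‖ := mul_one _
  have hδ0 : 0 ≤ δ := by
    refine le_csSup hbdd ⟨0, by simp, by simp, by simp⟩
  -- pointwise T at unit vectors
  have key1 : ∀ x : X, P x = 0 → ‖(T ^ n₀) x‖ ≤ δ * ‖x‖ := by
    intro x hx
    rcases eq_or_ne x 0 with rfl | hx0
    · simp
    · have hnx : (0:ℝ) < ‖x‖ := norm_pos_iff.mpr hx0
      set y : X := (‖x‖ : ℝ)⁻¹ • x with hy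
      have hPy : P y = 0 := by simp [hy, hx]
      have hny : ‖y‖ ≤ 1 := by
        simp [hy, norm_smul, abs_of_pos (inv_pos.mpr hnx), inv_mul_cancel₀ hnx.ne', le_refl]
      have hmem : ‖(T ^ n₀) y‖ ∈ S := ⟨y, hPy, hny, rfl⟩
      have hle : ‖(T ^ n₀) y‖ ≤ δ := le_csSup hbdd hmem
      have : ‖(T ^ n₀) y‖ = (‖x‖)⁻¹ * ‖(T ^ n₀) x‖ := by
        rw [hy, ContinuousLinearMap.map_smul_of_tower, norm_smul, norm_inv, norm_norm]
      rw [this] at hle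
      calc ‖(T ^ n₀) x‖ = ‖x‖ * ((‖x‖)⁻¹ * ‖(T ^ n₀) x‖) := by
            field_simp
      _ ≤ ‖x‖ * δ := mul_le_mul_of_nonneg_left hle hnx.le
      _ = δ * ‖x‖ := mul_comm _ _
  -- norms of powers of T
  have hTn : ∀ m : ℕ, ‖T ^ m‖ ≤ 1 := by
    intro m
    induction m with
    | zero => simpa using (by exact ContinuousLinearMap.norm_id_le : ‖(1 : X →L[ℂ] X)‖ ≤ 1)
    | succ j ih =>
      calc ‖T ^ (j + 1)‖ = ‖T ^ j * T‖ := by rw [pow_succ]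
      _ ≤ ‖T ^ j‖ * ‖T‖ := norm_mul_le _ _
      _ ≤ 1 * 1 := mul_le_mul ih hT (norm_nonneg T) zero_le_one
      _ = 1 := one_mul 1
  have hTnle : ∀ (m : ℕ) (x : X), ‖(T ^ m) x‖ ≤ ‖x‖ := by
    intro m x
    calc ‖(T ^ m) x‖ ≤ ‖T ^ m‖ * ‖x‖ := (T ^ m).le_opNorm x
    _ ≤ 1 * ‖x‖ := mul_le_mul_of_nonneg_right (hTn m) (norm_nonneg x)
    _ = ‖x‖ := one_mul _
  set n₁ := n₀ + 1 with hn₁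
  -- P kills T-iterates of kernel elements
  have hPTpt : ∀ x : X, P (T x) = P x := fun x => congrFun (congrArg DFunLike.coe hPT) x
  have hPTn : ∀ (m : ℕ) (x : X), P ((T ^ m) x) = P x := by
    intro m
    induction m with
    | zero => intro x; simp
    | succ k ih =>
      intro x
      rw [pow_succ']
      simp only [ContinuousLinearMap.mul_apply]
      rw [hPTpt, ih]
  have key2 : ∀ x : X, P x = 0 → ‖(T ^ n₁) x‖ ≤ δ * ‖x‖ := by
    intro x hx
    have : (T ^ n₁) x = (T ^ n₀) (T x) := by
      rw [hn₁, pow_succ]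
      simp [ContinuousLinearMap.mul_apply]
    rw [this]
    have hPtx : P (T x) = 0 := by rw [hPTpt, hx]
    calc ‖(T ^ n₀) (T x)‖ ≤ δ * ‖T x‖ := key1 _ hPtx
    _ ≤ δ * ‖x‖ := by
        refine mul_le_mul_of_nonneg_left ?_ hδ0
        simpa using hTnle 1 x
  -- iterated contraction
  have iter : ∀ (k : ℕ) (x : X), P x = 0 → ‖(T ^ (n₁ * k)) x‖ ≤ δ ^ k * ‖x‖ := by
    intro k
    induction k with
    | zero => intro x hx; simp
    | succ j ih =>
      intro x hx
      have hsplit : (T ^ (n₁ * (j + 1))) x = (T ^ (n₁ * j)) ((T ^ n₁) x) := by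
        rw [Nat.mul_succ, pow_add]
        simp [ContinuousLinearMap.mul_apply]
      rw [hsplit]
      have hker : P ((T ^ n₁) x) = 0 := by rw [hPTn, hx]
      calc ‖(T ^ (n₁ * j)) ((T ^ n₁) x)‖ ≤ δ ^ j * ‖(T ^ n₁) x‖ := ih _ hker
      _ ≤ δ ^ j * (δ * ‖x‖) := mul_le_mul_of_nonneg_left (key2 x hx) (by positivity)
      _ = δ ^ (j + 1) * ‖x‖ := by ring
  -- operator identities
  have hmulPT : P * T = P := hPT
  have hmulTP : T * P = P := hTP
  have hmulPP : P * P = P := hProj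
  have hTmP : ∀ m : ℕ, T ^ (m + 1) * P = P := by
    intro m
    induction m with
    | zero => simpa using hmulTP
    | succ j ih =>
      rw [pow_succ', mul_assoc, ih, hmulTP]
  have powsub : ∀ m : ℕ, (T - P) ^ (m + 1) = T ^ (m + 1) - P := by
    intro m
    induction m with
    | zero => simp
    | succ j ih =>
      rw [pow_succ, ih, sub_mul, mul_sub, mul_sub, hTmP j, ← pow_succ, hmulPT, hmulPP]
      abel
  -- choose k with δ ^ k small
  obtain ⟨k, hk⟩ : ∃ k : ℕ, δ ^ k < 1 / 2 := exists_pow_lt_of_lt_one (by norm_num) hδ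
  set K := k + 1 with hK
  have hδK : δ ^ K < 1 / 2 := by
    calc δ ^ K = δ * δ ^ k := by rw [hK, pow_succ]; ring
    _ ≤ 1 * δ ^ k := mul_le_mul_of_nonneg_right hδ.le (by positivity)
    _ = δ ^ k := one_mul _
    _ < 1 / 2 := hk
  set N := n₁ * K with hN
  have hN1 : 0 < N := by rw [hN, hn₁, hK]; positivity
  obtain ⟨m, hm⟩ : ∃ m : ℕ, N = m + 1 := ⟨N - 1, by omega⟩
  -- norm bound on (T - P) ^ N
  have hbound : ∀ x : X, ‖((T - P) ^ N) x‖ ≤ 2 * δ ^ K * ‖x‖ := by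
    intro x
    have h1 : ((T - P) ^ N) x = (T ^ N) (x - P x) := by
      rw [hm, powsub m]
      have h2 : (T ^ (m + 1)) (P x) = P x := by
        have := congrFun (congrArg DFunLike.coe (hTmP m)) x
        simpa [ContinuousLinearMap.mul_apply] using this
      simp [map_sub, h2]
    rw [h1]
    have hker : P (x - P x) = 0 := by
      have := congrFun (congrArg DFunLike.coe hProj) x
      simp only [ContinuousLinearMap.comp_apply] at this
      simp [map_sub, this]
    have hxPx : ‖x - P x‖ ≤ 2 * ‖x‖ := by
      calc ‖x - P x‖ ≤ ‖x‖ + ‖P x‖ := norm_sub_le _ _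
      _ ≤ ‖x‖ + ‖P‖ * ‖x‖ := by linarith [P.le_opNorm x]
      _ ≤ ‖x‖ + 1 * ‖x‖ := by
          have := mul_le_mul_of_nonneg_right hPnorm (norm_nonneg x)
          linarith
      _ = 2 * ‖x‖ := by ring
    calc ‖(T ^ N) (x - P x)‖ ≤ δ ^ K * ‖x - P x‖ := iter K _ hker
    _ ≤ δ ^ K * (2 * ‖x‖) := mul_le_mul_of_nonneg_left hxPx (by positivity)
    _ = 2 * δ ^ K * ‖x‖ := by ring
  have hnormN : ‖(T - P) ^ N‖ ≤ 2 * δ ^ K :=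
    ContinuousLinearMap.opNorm_le_bound _ (by positivity) hbound
  have hlt1 : ‖(T - P) ^ N‖ < 1 := by
    calc ‖(T - P) ^ N‖ ≤ 2 * δ ^ K := hnormN
    _ < 2 * (1 / 2) := by linarith
    _ = 1 := by norm_num
  -- conclude via spectral radius bound
  have hrad := spectrum.spectralRadius_le_pow_nnnorm_pow_one_div ℂ (T - P) m
  rw [← hm] at hrad
  have hNpos : (0:ℝ) < 1 / (N : ℝ) := by
    have : (0:ℕ) < N := by omega
    positivity
  have hnn1 : (‖(T - P) ^ N‖₊ : ENNReal) < 1 := by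
    rw [← ENNReal.coe_one, ENNReal.coe_lt_coe, ← NNReal.coe_lt_coe]
    simpa [coe_nnnorm] using hlt1
  have hfac1 : ((‖(T - P) ^ N‖₊ : ENNReal)) ^ (1 / (N:ℝ)) < 1 :=
    ENNReal.rpow_lt_one hnn1 hNpos
  have hid : (‖(1 : X →L[ℂ] X)‖₊ : ENNReal) ≤ 1 := by
    rw [← ENNReal.coe_one, ENNReal.coe_le_coe, ← NNReal.coe_le_coe]
    simpa [coe_nnnorm] using (by exact ContinuousLinearMap.norm_id_le : ‖(1 : X →L[ℂ] X)‖ ≤ 1)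
  have hfac2 : ((‖(1 : X →L[ℂ] X)‖₊ : ENNReal)) ^ (1 / (N:ℝ)) ≤ 1 :=
    ENNReal.rpow_le_one hid hNpos.le
  calc spectralRadius ℂ (T - P)
      ≤ ((‖(T - P) ^ N‖₊ : ENNReal)) ^ (1 / (N:ℝ)) *
        ((‖(1 : X →L[ℂ] X)‖₊ : ENNReal)) ^ (1 / (N:ℝ)) := by
        have hcast : ((m : ℝ) + 1) = (N : ℝ) := by
          rw [hm]; push_cast; ring
        simpa [hcast] using hrad
  _ ≤ ((‖(T - P) ^ N‖₊ : ENNReal)) ^ (1 / (N:ℝ)) * 1 := mul_le_mul_right hfac2 _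
  _ = ((‖(T - P) ^ N‖₊ : ENNReal)) ^ (1 / (N:ℝ)) := mul_one _
  _ < 1 := hfac1
end

section
/- Let X be a complex Banach space, T a bounded linear operator on X with ‖T‖ ≤ 1, and P a bounded projection (P ∘ P = P) on X with ‖P‖ ≤ 1 and PT = TP = P. Then r(T − P) = lim_{n→∞} (δ_P(Tⁿ))^{1/n} = inf_{n ≥ 1} (δ_P(Tⁿ))^{1/n}. -/
open Filter Topology
open scoped ENNReal NNReal

namespace StmtAux

variable {X : Type*} [NormedAddCommGroup X] [NormedSpace ℂ X]

lemma dobSet_nonempty (P Q : X →L[ℂ] X) :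
    Set.Nonempty {r : ℝ | ∃ x : X, P x = 0 ∧ ‖x‖ ≤ 1 ∧ r = ‖Q x‖} :=
  ⟨‖Q 0‖, 0, by simp, by simp, rfl⟩

lemma dobSet_bddAbove (P Q : X →L[ℂ] X) :
    BddAbove {r : ℝ | ∃ x : X, P x = 0 ∧ ‖x‖ ≤ 1 ∧ r = ‖Q x‖} := by
  refine ⟨‖Q‖, fun r hr => ?_⟩
  obtain ⟨x, -, hx, rfl⟩ := hr
  calc ‖Q x‖ ≤ ‖Q‖ * ‖x‖ := Q.le_opNorm x
    _ ≤ ‖Q‖ * 1 := by gcongr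
    _ = ‖Q‖ := mul_one _

lemma dob_nonneg (P Q : X →L[ℂ] X) : 0 ≤ dobrushinCoeff P Q :=
  le_csSup (dobSet_bddAbove P Q) ⟨0, by simp, by simp, by simp⟩

lemma dob_le (P Q : X →L[ℂ] X) {C : ℝ}
    (h : ∀ x : X, P x = 0 → ‖x‖ ≤ 1 → ‖Q x‖ ≤ C) : dobrushinCoeff P Q ≤ C :=
  csSup_le (dobSet_nonempty P Q) (by rintro r ⟨x, h1, h2, rfl⟩; exact h x h1 h2)

lemma norm_apply_le_dob (P Q : X →L[ℂ] X) {y : X} (hy : P y = 0) :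
    ‖Q y‖ ≤ dobrushinCoeff P Q * ‖y‖ := by
  rcases eq_or_ne y 0 with rfl | hy0
  · simp
  · have hn : 0 < ‖y‖ := norm_pos_iff.mpr hy0
    set c : ℂ := (‖y‖ : ℂ)⁻¹ with hc_def
    have hc : ‖c‖ = ‖y‖⁻¹ := by
      rw [hc_def, norm_inv, Complex.norm_real, Real.norm_eq_abs, abs_of_nonneg hn.le]
    have hmem : ‖Q (c • y)‖ ∈
        {r : ℝ | ∃ x : X, P x = 0 ∧ ‖x‖ ≤ 1 ∧ r = ‖Q x‖} := by
      refine ⟨c • y, by simp [map_smul, hy], ?_, rfl⟩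
      rw [norm_smul, hc, inv_mul_cancel₀ hn.ne']
    have hle : ‖Q (c • y)‖ ≤ dobrushinCoeff P Q :=
      le_csSup (dobSet_bddAbove P Q) hmem
    rw [map_smul, norm_smul, hc] at hle
    have : ‖Q y‖ = ‖y‖ * (‖y‖⁻¹ * ‖Q y‖) := by field_simp
    rw [this]
    calc ‖y‖ * (‖y‖⁻¹ * ‖Q y‖) ≤ ‖y‖ * dobrushinCoeff P Q := by gcongr
      _ = dobrushinCoeff P Q * ‖y‖ := mul_comm _ _

end StmtAux

open StmtAux in
theorem stmt6 {X : Type*} [NormedAddCommGroup X] [NormedSpace ℂ X] [CompleteSpace X]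
    (T P : X →L[ℂ] X) (hT : ‖T‖ ≤ 1) (hPnorm : ‖P‖ ≤ 1)
    (hProj : P.comp P = P) (hPT : P.comp T = P) (hTP : T.comp P = P) :
    Tendsto (fun n : ℕ => dobrushinCoeff P (T ^ n) ^ ((1 : ℝ) / (n : ℝ))) atTop
      (𝓝 ((spectralRadius ℂ (T - P)).toReal)) ∧
    (spectralRadius ℂ (T - P)).toReal =
      ⨅ n : {m : ℕ // 1 ≤ m}, dobrushinCoeff P (T ^ (n : ℕ)) ^ ((1 : ℝ) / ((n : ℕ) : ℝ)) := by
  have hPP : P * P = P := hProj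
  have hPT' : P * T = P := hPT
  have hTP' : T * P = P := hTP
  -- algebraic identities
  have hTnP : ∀ n : ℕ, T ^ n * P = P := by
    intro n
    induction n with
    | zero => simp
    | succ m ih => rw [pow_succ, mul_assoc, hTP', ih]
  have hPTn : ∀ n : ℕ, P * T ^ n = P := by
    intro n
    induction n with
    | zero => simp
    | succ m ih => rw [pow_succ, ← mul_assoc, ih, hPT']
  have hAn : ∀ n : ℕ, 1 ≤ n → (T - P) ^ n = T ^ n - P := by
    intro n hn
    induction n with
    | zero => omega
    | succ m ih =>
      rcases Nat.eq_or_lt_of_le hn with h | h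
      · simp [← h]
      · have hm : 1 ≤ m := by omega
        rw [pow_succ, ih hm, sub_mul, mul_sub, mul_sub, hTnP m, hPT', hPP, ← pow_succ]
        abel
  -- δ ≤ ‖Tⁿ - P‖
  have hdob_le_norm : ∀ n : ℕ, dobrushinCoeff P (T ^ n) ≤ ‖T ^ n - P‖ := by
    intro n
    refine dob_le P (T ^ n) fun x hx hx1 => ?_
    have hxeq : (T ^ n) x = (T ^ n - P) x := by
      simp [ContinuousLinearMap.sub_apply, hx]
    rw [hxeq]
    calc ‖(T ^ n - P) x‖ ≤ ‖T ^ n - P‖ * ‖x‖ := (T ^ n - P).le_opNorm x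
      _ ≤ ‖T ^ n - P‖ * 1 := by gcongr
      _ = ‖T ^ n - P‖ := mul_one _
  -- ‖Tⁿ - P‖ ≤ 2δ
  have hnorm_le_dob : ∀ n : ℕ, ‖T ^ n - P‖ ≤ 2 * dobrushinCoeff P (T ^ n) := by
    intro n
    have h2 : 0 ≤ dobrushinCoeff P (T ^ n) := dob_nonneg P (T ^ n)
    refine ContinuousLinearMap.opNorm_le_bound _ (by linarith) fun x => ?_
    have hPy : P (x - P x) = 0 := by
      have h := congrArg (fun S : X →L[ℂ] X => S x) hProj
      simp only [ContinuousLinearMap.comp_apply] at h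
      simp [map_sub, h]
    have heq : (T ^ n - P) x = (T ^ n) (x - P x) := by
      have h := congrArg (fun S : X →L[ℂ] X => S x) (hTnP n)
      simp only [ContinuousLinearMap.mul_apply] at h
      simp [ContinuousLinearMap.sub_apply, map_sub, h]
    have hb : ‖x - P x‖ ≤ 2 * ‖x‖ := by
      calc ‖x - P x‖ ≤ ‖x‖ + ‖P x‖ := norm_sub_le _ _
        _ ≤ ‖x‖ + ‖P‖ * ‖x‖ := by gcongr; exact P.le_opNorm x
        _ ≤ ‖x‖ + 1 * ‖x‖ := by gcongr
        _ = 2 * ‖x‖ := by ring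
    calc ‖(T ^ n - P) x‖ = ‖(T ^ n) (x - P x)‖ := by rw [heq]
      _ ≤ dobrushinCoeff P (T ^ n) * ‖x - P x‖ := norm_apply_le_dob P _ hPy
      _ ≤ dobrushinCoeff P (T ^ n) * (2 * ‖x‖) := by gcongr
      _ = 2 * dobrushinCoeff P (T ^ n) * ‖x‖ := by ring
  -- submultiplicativity
  have hsub : ∀ m n : ℕ, dobrushinCoeff P (T ^ (m + n)) ≤
      dobrushinCoeff P (T ^ m) * dobrushinCoeff P (T ^ n) := by
    intro m n
    refine dob_le P _ fun x hx hx1 => ?_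
    have h1 : (T ^ (m + n)) x = (T ^ m) ((T ^ n) x) := by
      rw [pow_add]; rfl
    have hPx : P ((T ^ n) x) = 0 := by
      have h := congrArg (fun S : X →L[ℂ] X => S x) (hPTn n)
      simp only [ContinuousLinearMap.mul_apply] at h
      rw [h, hx]
    have h2 : ‖(T ^ n) x‖ ≤ dobrushinCoeff P (T ^ n) := by
      calc ‖(T ^ n) x‖ ≤ dobrushinCoeff P (T ^ n) * ‖x‖ := norm_apply_le_dob P _ hx
        _ ≤ dobrushinCoeff P (T ^ n) * 1 := by gcongr; exact dob_nonneg P _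
        _ = _ := mul_one _
    calc ‖(T ^ (m + n)) x‖ = ‖(T ^ m) ((T ^ n) x)‖ := by rw [h1]
      _ ≤ dobrushinCoeff P (T ^ m) * ‖(T ^ n) x‖ := norm_apply_le_dob P _ hPx
      _ ≤ dobrushinCoeff P (T ^ m) * dobrushinCoeff P (T ^ n) := by
          gcongr; exact dob_nonneg P _
  have hsubpow : ∀ n k : ℕ, 1 ≤ k →
      dobrushinCoeff P (T ^ (n * k)) ≤ dobrushinCoeff P (T ^ n) ^ k := by
    intro n k hk
    induction k with
    | zero => omega
    | succ j ih =>
      rcases Nat.eq_or_lt_of_le hk with h | h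
      · simp [← h]
      · have hj : 1 ≤ j := by omega
        have : n * (j + 1) = n * j + n := by ring
        rw [this, pow_succ]
        calc dobrushinCoeff P (T ^ (n * j + n)) ≤
            dobrushinCoeff P (T ^ (n * j)) * dobrushinCoeff P (T ^ n) := hsub _ _
          _ ≤ dobrushinCoeff P (T ^ n) ^ j * dobrushinCoeff P (T ^ n) :=
              mul_le_mul_of_nonneg_right (ih hj) (dob_nonneg P _)
  -- spectral radius facts
  set A := T - P with hA
  set r : ℝ := (spectralRadius ℂ A).toReal with hr
  have hr0 : 0 ≤ r := ENNReal.toReal_nonneg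
  have hone : (‖(1 : X →L[ℂ] X)‖₊ : ℝ≥0∞) ≤ 1 := by
    rw [← ENNReal.coe_one, ENNReal.coe_le_coe]
    exact ContinuousLinearMap.norm_id_le
  have hrfin : spectralRadius ℂ A ≠ ⊤ := by
    have h := spectrum.spectralRadius_le_pow_nnnorm_pow_one_div ℂ A 0
    refine ne_top_of_le_ne_top ?_ h
    apply ENNReal.mul_ne_top <;>
      exact ENNReal.rpow_ne_top_of_nonneg (by positivity) ENNReal.coe_ne_top
  have key : ∀ m : ℕ, 1 ≤ m → r ^ m ≤ ‖T ^ m - P‖ := by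
    intro m hm
    obtain ⟨m', rfl⟩ : ∃ m', m = m' + 1 := ⟨m - 1, by omega⟩
    have h := spectrum.spectralRadius_le_pow_nnnorm_pow_one_div ℂ A m'
    have h2 : spectralRadius ℂ A ≤ (‖A ^ (m' + 1)‖₊ : ℝ≥0∞) ^ (1 / (m' + 1 : ℕ) : ℝ) := by
      refine h.trans ?_
      push_cast
      refine mul_le_of_le_one_right (by positivity) ?_
      exact ENNReal.rpow_le_one hone (by positivity)
    have h3 : r ≤ ‖A ^ (m' + 1)‖ ^ (1 / (m' + 1 : ℕ) : ℝ) := by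
      have h4 := ENNReal.toReal_mono
        (ENNReal.rpow_ne_top_of_nonneg (by positivity) ENNReal.coe_ne_top) h2
      rwa [← ENNReal.toReal_rpow, ENNReal.coe_toReal, coe_nnnorm] at h4
    have h5 : r ^ (m' + 1) ≤ ‖A ^ (m' + 1)‖ := by
      calc r ^ (m' + 1) ≤ (‖A ^ (m' + 1)‖ ^ (1 / (m' + 1 : ℕ) : ℝ)) ^ (m' + 1) :=
            pow_le_pow_left₀ hr0 h3 _
        _ = ‖A ^ (m' + 1)‖ := by
            rw [one_div]
            exact Real.rpow_inv_natCast_pow (norm_nonneg _) (by omega)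
    rwa [hAn (m' + 1) (by omega)] at h5
  -- r^n ≤ δ(Tⁿ)
  have keyδ : ∀ n : ℕ, 1 ≤ n → r ^ n ≤ dobrushinCoeff P (T ^ n) := by
    intro n hn
    set s := dobrushinCoeff P (T ^ n) with hs_def
    have hs0 : 0 ≤ s := dob_nonneg P _
    by_contra hlt
    push_neg at hlt
    rcases eq_or_lt_of_le hs0 with hs | hs
    · have h1 : r ^ n ≤ 2 * s := (key n hn).trans (hnorm_le_dob n)
      rw [← hs] at h1
      linarith
    · obtain ⟨k, hk⟩ := pow_unbounded_of_one_lt (2 : ℝ) ((one_lt_div hs).mpr hlt)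
      have hk1 : 1 ≤ k := by
        rcases Nat.eq_zero_or_pos k with h | h
        · rw [h] at hk; norm_num at hk
        · omega
      have hbig : (r ^ n) ^ k ≤ 2 * s ^ k := by
        calc (r ^ n) ^ k = r ^ (n * k) := by rw [← pow_mul]
          _ ≤ ‖T ^ (n * k) - P‖ := key (n * k) (by exact Nat.mul_pos hn hk1)
          _ ≤ 2 * dobrushinCoeff P (T ^ (n * k)) := hnorm_le_dob _
          _ ≤ 2 * s ^ k := by
              have := hsubpow n k hk1
              linarith
      rw [div_pow] at hk
      have h2 : 2 * s ^ k < (r ^ n) ^ k := by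
        have := (lt_div_iff₀ (pow_pos hs k)).mp hk
        linarith
      linarith
  -- Gelfand formula in ℝ
  have hL : Tendsto (fun n : ℕ => ‖A ^ n‖ ^ ((1 : ℝ) / (n : ℝ))) atTop (𝓝 r) := by
    have h := spectrum.pow_norm_pow_one_div_tendsto_nhds_spectralRadius A
    have h2 := (ENNReal.tendsto_toReal hrfin).comp h
    refine h2.congr fun n => ?_
    simp only [Function.comp_apply]
    rw [ENNReal.toReal_ofReal (by positivity)]
  set f : ℕ → ℝ := fun n => dobrushinCoeff P (T ^ n) ^ ((1 : ℝ) / (n : ℝ)) with hf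
  have hlow : ∀ n : ℕ, 1 ≤ n → r ≤ f n := by
    intro n hn
    have h1 : r = (r ^ n) ^ ((1 : ℝ) / (n : ℝ)) := by
      rw [one_div, Real.pow_rpow_inv_natCast hr0 (by omega)]
    rw [h1]
    exact Real.rpow_le_rpow (by positivity) (keyδ n hn) (by positivity)
  have hupp : ∀ n : ℕ, 1 ≤ n → f n ≤ ‖A ^ n‖ ^ ((1 : ℝ) / (n : ℝ)) := by
    intro n hn
    have := hdob_le_norm n
    rw [← hAn n hn] at this
    exact Real.rpow_le_rpow (dob_nonneg P _) this (by positivity)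
  have htend : Tendsto f atTop (𝓝 r) := by
    refine tendsto_of_tendsto_of_tendsto_of_le_of_le' tendsto_const_nhds hL ?_ ?_
    · exact eventually_atTop.mpr ⟨1, fun n hn => hlow n hn⟩
    · exact eventually_atTop.mpr ⟨1, fun n hn => hupp n hn⟩
  refine ⟨htend, le_antisymm ?_ ?_⟩
  · exact le_ciInf fun n => hlow n n.2
  · have hbdd : BddBelow (Set.range fun n : {m : ℕ // 1 ≤ m} => f (n : ℕ)) := by
      refine ⟨0, ?_⟩
      rintro y ⟨i, rfl⟩
      simp only [hf]
      exact Real.rpow_nonneg (dob_nonneg P _) _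
    refine ge_of_tendsto htend ?_
    refine eventually_atTop.mpr ⟨1, fun n hn => ?_⟩
    exact ciInf_le hbdd ⟨n, hn⟩
end

section
/- Let X be a complex Banach space, T a bounded linear operator on X with ‖T‖ ≤ 1, and P a bounded linear operator on X. If ‖Tⁿ − P‖ → 0 as n → ∞, then P is a projection satisfying TP = PT = P, and r(T − P) < 1. -/
open Filter Topology

theorem stmt7 {X : Type*} [NormedAddCommGroup X] [NormedSpace ℂ X] [CompleteSpace X]
    (T P : X →L[ℂ] X) (hT : ‖T‖ ≤ 1)
    (hErg : Tendsto (fun n : ℕ => ‖T ^ n - P‖) atTop (𝓝 0)) :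
    P.comp P = P ∧ T.comp P = P ∧ P.comp T = P ∧ spectralRadius ℂ (T - P) < 1 := by
  have hErg' : Tendsto (fun n : ℕ => ‖T ^ (n + 1) - P‖) atTop (𝓝 0) :=
    hErg.comp (tendsto_add_atTop_nat 1)
  -- T * P = P
  have hTP : T * P = P := by
    have hb : ∀ n : ℕ, ‖T * P - P‖ ≤ ‖T‖ * ‖T ^ n - P‖ + ‖T ^ (n + 1) - P‖ := by
      intro n
      have hd : T * P - P = T * (P - T ^ n) + (T ^ (n + 1) - P) := by
        rw [pow_succ']; noncomm_ring
      calc ‖T * P - P‖ = ‖T * (P - T ^ n) + (T ^ (n + 1) - P)‖ := by rw [hd]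
        _ ≤ ‖T * (P - T ^ n)‖ + ‖T ^ (n + 1) - P‖ := norm_add_le _ _
        _ ≤ ‖T‖ * ‖P - T ^ n‖ + ‖T ^ (n + 1) - P‖ := by
            gcongr; exact norm_mul_le _ _
        _ = ‖T‖ * ‖T ^ n - P‖ + ‖T ^ (n + 1) - P‖ := by rw [norm_sub_rev]
    have hf : Tendsto (fun n : ℕ => ‖T‖ * ‖T ^ n - P‖ + ‖T ^ (n + 1) - P‖) atTop (𝓝 0) := by
      simpa using (hErg.const_mul ‖T‖).add hErg'
    have hle : ‖T * P - P‖ ≤ 0 := ge_of_tendsto' hf hb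
    have : ‖T * P - P‖ = 0 := le_antisymm hle (norm_nonneg _)
    rwa [norm_eq_zero, sub_eq_zero] at this
  -- P * T = P
  have hPT : P * T = P := by
    have hb : ∀ n : ℕ, ‖P * T - P‖ ≤ ‖T ^ n - P‖ * ‖T‖ + ‖T ^ (n + 1) - P‖ := by
      intro n
      have hd : P * T - P = (P - T ^ n) * T + (T ^ (n + 1) - P) := by
        rw [pow_succ]; noncomm_ring
      calc ‖P * T - P‖ = ‖(P - T ^ n) * T + (T ^ (n + 1) - P)‖ := by rw [hd]
        _ ≤ ‖(P - T ^ n) * T‖ + ‖T ^ (n + 1) - P‖ := norm_add_le _ _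
        _ ≤ ‖P - T ^ n‖ * ‖T‖ + ‖T ^ (n + 1) - P‖ := by
            gcongr; exact norm_mul_le _ _
        _ = ‖T ^ n - P‖ * ‖T‖ + ‖T ^ (n + 1) - P‖ := by rw [norm_sub_rev]
    have hf : Tendsto (fun n : ℕ => ‖T ^ n - P‖ * ‖T‖ + ‖T ^ (n + 1) - P‖) atTop (𝓝 0) := by
      simpa using (hErg.mul_const ‖T‖).add hErg'
    have hle : ‖P * T - P‖ ≤ 0 := ge_of_tendsto' hf hb
    have : ‖P * T - P‖ = 0 := le_antisymm hle (norm_nonneg _)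
    rwa [norm_eq_zero, sub_eq_zero] at this
  -- T ^ n * P = P
  have hTnP : ∀ n : ℕ, T ^ n * P = P := by
    intro n
    induction n with
    | zero => simp
    | succ k ih => rw [pow_succ, mul_assoc, hTP, ih]
  -- P * P = P
  have hPP : P * P = P := by
    have hb : ∀ n : ℕ, ‖P * P - P‖ ≤ ‖T ^ n - P‖ * ‖P‖ := by
      intro n
      have hd : P * P - P = (P - T ^ n) * P := by
        rw [sub_mul, hTnP n]
      calc ‖P * P - P‖ = ‖(P - T ^ n) * P‖ := by rw [hd]
        _ ≤ ‖P - T ^ n‖ * ‖P‖ := norm_mul_le _ _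
        _ = ‖T ^ n - P‖ * ‖P‖ := by rw [norm_sub_rev]
    have hf : Tendsto (fun n : ℕ => ‖T ^ n - P‖ * ‖P‖) atTop (𝓝 0) := by
      simpa using hErg.mul_const ‖P‖
    have hle : ‖P * P - P‖ ≤ 0 := ge_of_tendsto' hf hb
    have : ‖P * P - P‖ = 0 := le_antisymm hle (norm_nonneg _)
    rwa [norm_eq_zero, sub_eq_zero] at this
  -- (T - P) ^ (n+1) = T ^ (n+1) - P
  have hpow : ∀ n : ℕ, (T - P) ^ (n + 1) = T ^ (n + 1) - P := by
    intro n
    induction n with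
    | zero => simp
    | succ k ih =>
      rw [pow_succ, ih, sub_mul, mul_sub, mul_sub, hTnP (k + 1), hPT, hPP, ← pow_succ]
      abel
  -- spectral radius
  have hrad : spectralRadius ℂ (T - P) < 1 := by
    obtain ⟨N, hN⟩ := (Metric.tendsto_atTop.mp hErg 1 one_pos) |>.imp (fun N h => h)
    have hNn : ‖(T - P) ^ (N + 1)‖ < 1 := by
      rw [hpow N]
      have := hN (N + 1) (Nat.le_succ N)
      simpa [Real.dist_eq, abs_of_nonneg (norm_nonneg _)] using this
    have h1 : spectralRadius ℂ (T - P) ≤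
        (‖(T - P) ^ (N + 1)‖₊ : ENNReal) ^ (1 / (N + 1) : ℝ) *
          (‖(1 : X →L[ℂ] X)‖₊ : ENNReal) ^ (1 / (N + 1) : ℝ) :=
      spectrum.spectralRadius_le_pow_nnnorm_pow_one_div ℂ (T - P) N
    have hexp : (0 : ℝ) < 1 / (N + 1) := by positivity
    have h2 : (‖(T - P) ^ (N + 1)‖₊ : ENNReal) ^ (1 / (N + 1) : ℝ) < 1 := by
      apply ENNReal.rpow_lt_one _ hexp
      exact_mod_cast hNn
    have h3 : (‖(1 : X →L[ℂ] X)‖₊ : ENNReal) ^ (1 / (N + 1) : ℝ) ≤ 1 := by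
      apply ENNReal.rpow_le_one _ hexp.le
      exact_mod_cast ContinuousLinearMap.norm_id_le
    calc spectralRadius ℂ (T - P) ≤ _ := h1
      _ ≤ (‖(T - P) ^ (N + 1)‖₊ : ENNReal) ^ (1 / (N + 1) : ℝ) * 1 :=
        mul_le_mul_right h3 _
      _ < 1 := by rwa [mul_one]
  exact ⟨by rw [ContinuousLinearMap.mul_def] at hPP; exact hPP,
    by rw [ContinuousLinearMap.mul_def] at hTP; exact hTP,
    by rw [ContinuousLinearMap.mul_def] at hPT; exact hPT, hrad⟩
end

section
/- Let X be a complex Banach space, T a bounded linear operator on X with ‖T‖ ≤ 1, and P a bounded projection (P ∘ P = P) on X with PT = TP = P. For λ ∈ ℂ with λ ≠ 0 and λ ≠ 1: there exists a sequence (xₙ) in X with ‖xₙ‖ = 1 for all n and ‖(T − P)xₙ − λxₙ‖ → 0 if and only if there exists a sequence (yₙ) in X with ‖yₙ‖ = 1 for all n and ‖Tyₙ − λyₙ‖ → 0. (Equivalently, λ lies in the approximate point spectrum of T − P if and only if it lies in the approximate point spectrum of T.) -/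
open Filter Topology

theorem aux_normalize {X : Type*} [NormedAddCommGroup X] [NormedSpace ℂ X]
    (A : X →L[ℂ] X) (μ : ℂ) (z : ℕ → X)
    (hz : Tendsto (fun n => ‖z n‖) atTop (𝓝 1))
    (hA : Tendsto (fun n => ‖A (z n) - μ • z n‖) atTop (𝓝 0)) :
    ∃ x : ℕ → X, (∀ n, ‖x n‖ = 1) ∧
      Tendsto (fun n => ‖A (x n) - μ • x n‖) atTop (𝓝 0) := by
  have hev : ∀ᶠ n in atTop, (1:ℝ)/2 < ‖z n‖ :=
    hz.eventually (eventually_gt_nhds (by norm_num))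
  obtain ⟨n₀, hn₀⟩ := hev.exists
  have hz0 : z n₀ ≠ 0 := by
    intro h
    rw [h, norm_zero] at hn₀
    linarith
  have key : ∀ v : X, v ≠ 0 → ‖(‖v‖ : ℂ)⁻¹ • v‖ = 1 := by
    intro v hv
    rw [norm_smul, norm_inv]
    have h1 : ‖((‖v‖ : ℝ) : ℂ)‖ = ‖v‖ := by
      rw [Complex.norm_real, norm_norm]
    rw [h1, inv_mul_cancel₀ (norm_ne_zero_iff.mpr hv)]
  classical
  refine ⟨fun n => if h : z n = 0 then (‖z n₀‖ : ℂ)⁻¹ • z n₀ else (‖z n‖ : ℂ)⁻¹ • z n, ?_, ?_⟩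
  · intro n
    by_cases h : z n = 0
    · simp only [dif_pos h]
      exact key _ hz0
    · simp only [dif_neg h]
      exact key _ h
  · apply squeeze_zero' (g := fun n => 2 * ‖A (z n) - μ • z n‖)
    · exact Eventually.of_forall fun n => norm_nonneg _
    · filter_upwards [hev] with n hn
      have h : z n ≠ 0 := by
        intro h; rw [h, norm_zero] at hn; linarith
      simp only [dif_neg h]
      rw [map_smul, smul_comm μ, ← smul_sub, norm_smul, norm_inv]
      have h1 : ‖((‖z n‖ : ℝ) : ℂ)‖ = ‖z n‖ := by
        rw [Complex.norm_real, norm_norm]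
      rw [h1]
      have h2 : ‖z n‖⁻¹ ≤ 2 := by
        rw [inv_le_comm₀ (by linarith) (by norm_num)]
        linarith
      exact mul_le_mul_of_nonneg_right h2 (norm_nonneg _)
    · simpa using hA.const_mul 2

theorem stmt9 {X : Type*} [NormedAddCommGroup X] [NormedSpace ℂ X] [CompleteSpace X]
    (T P : X →L[ℂ] X) (hT : ‖T‖ ≤ 1)
    (hProj : P.comp P = P) (hPT : P.comp T = P) (hTP : T.comp P = P)
    (μ : ℂ) (hμ0 : μ ≠ 0) (hμ1 : μ ≠ 1) :
    (∃ x : ℕ → X, (∀ n, ‖x n‖ = 1) ∧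
        Tendsto (fun n => ‖(T - P) (x n) - μ • x n‖) atTop (𝓝 0)) ↔
    (∃ y : ℕ → X, (∀ n, ‖y n‖ = 1) ∧
        Tendsto (fun n => ‖T (y n) - μ • y n‖) atTop (𝓝 0)) := by
  have hPT' : ∀ v : X, P (T v) = P v := fun v =>
    congrArg (fun (A : X →L[ℂ] X) => A v) hPT
  have hTP' : ∀ v : X, T (P v) = P v := fun v =>
    congrArg (fun (A : X →L[ℂ] X) => A v) hTP
  have hPP' : ∀ v : X, P (P v) = P v := fun v =>
    congrArg (fun (A : X →L[ℂ] X) => A v) hProj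
  constructor
  · rintro ⟨x, hx1, hx⟩
    set v : ℕ → X := fun n => x n - P (x n) with hv
    have hPv : ∀ n, P (v n) = 0 := fun n => by simp [hv, hPP']
    have hTPx : ∀ n, (T - P) (x n) = T (v n) := by
      intro n
      simp [hv, map_sub, hTP']
    -- so ‖T (v n) - μ • x n‖ → 0
    have hx' : Tendsto (fun n => ‖T (v n) - μ • x n‖) atTop (𝓝 0) := by
      simpa [hTPx] using hx
    -- P component goes to 0
    have hPx0 : Tendsto (fun n => ‖P (x n)‖) atTop (𝓝 0) := by
      apply squeeze_zero (fun n => norm_nonneg _)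
        (g := fun n => (‖μ‖⁻¹ * ‖P‖) * ‖T (v n) - μ • x n‖)
      · intro n
        have h1 : P (T (v n) - μ • x n) = -(μ • P (x n)) := by
          rw [map_sub, hPT', hPv, map_smul]; simp
        have h2 : ‖μ‖ * ‖P (x n)‖ ≤ ‖P‖ * ‖T (v n) - μ • x n‖ := by
          calc ‖μ‖ * ‖P (x n)‖ = ‖P (T (v n) - μ • x n)‖ := by
                rw [h1, norm_neg, norm_smul]
            _ ≤ ‖P‖ * ‖T (v n) - μ • x n‖ := P.le_opNorm _
        have hμ : (0:ℝ) < ‖μ‖ := norm_pos_iff.mpr hμ0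
        calc ‖P (x n)‖ = ‖μ‖⁻¹ * (‖μ‖ * ‖P (x n)‖) := by
              rw [inv_mul_cancel_left₀ hμ.ne']
          _ ≤ ‖μ‖⁻¹ * (‖P‖ * ‖T (v n) - μ • x n‖) :=
              mul_le_mul_of_nonneg_left h2 (inv_nonneg.mpr hμ.le)
          _ = ‖μ‖⁻¹ * ‖P‖ * ‖T (v n) - μ • x n‖ := by ring
      · simpa using hx'.const_mul (‖μ‖⁻¹ * ‖P‖)
    -- ‖v n‖ → 1
    have hvnorm : Tendsto (fun n => ‖v n‖) atTop (𝓝 1) := by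
      have hlow : ∀ n, 1 - ‖P (x n)‖ ≤ ‖v n‖ := by
        intro n
        have := norm_sub_norm_le (x n) (P (x n))
        rw [hx1 n] at this
        simpa [hv] using this
      have hhigh : ∀ n, ‖v n‖ ≤ 1 + ‖P (x n)‖ := by
        intro n
        have := norm_sub_le (x n) (P (x n))
        rw [hx1 n] at this
        simpa [hv] using this
      have h1 : Tendsto (fun n => 1 - ‖P (x n)‖) atTop (𝓝 1) := by
        simpa using (tendsto_const_nhds (x := (1:ℝ))).sub hPx0
      have h2 : Tendsto (fun n => 1 + ‖P (x n)‖) atTop (𝓝 1) := by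
        simpa using (tendsto_const_nhds (x := (1:ℝ))).add hPx0
      exact tendsto_of_tendsto_of_tendsto_of_le_of_le h1 h2 hlow hhigh
    -- ‖T v - μ v‖ → 0
    have hTv : Tendsto (fun n => ‖T (v n) - μ • v n‖) atTop (𝓝 0) := by
      apply squeeze_zero (fun n => norm_nonneg _)
        (g := fun n => ‖T (v n) - μ • x n‖ + ‖μ‖ * ‖P (x n)‖)
      · intro n
        have h1 : T (v n) - μ • v n = (T (v n) - μ • x n) + μ • P (x n) := by
          simp [hv, smul_sub]; abel
        rw [h1]
        calc ‖(T (v n) - μ • x n) + μ • P (x n)‖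
            ≤ ‖T (v n) - μ • x n‖ + ‖μ • P (x n)‖ := norm_add_le _ _
          _ = ‖T (v n) - μ • x n‖ + ‖μ‖ * ‖P (x n)‖ := by rw [norm_smul]
      · simpa using hx'.add (hPx0.const_mul ‖μ‖)
    exact aux_normalize T μ v hvnorm hTv
  · rintro ⟨y, hy1, hy⟩
    -- P y n → 0
    have hPy0 : Tendsto (fun n => ‖P (y n)‖) atTop (𝓝 0) := by
      apply squeeze_zero (fun n => norm_nonneg _)
        (g := fun n => (‖1 - μ‖⁻¹ * ‖P‖) * ‖T (y n) - μ • y n‖)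
      · intro n
        have h1 : P (T (y n) - μ • y n) = (1 - μ) • P (y n) := by
          rw [map_sub, hPT', map_smul, sub_smul, one_smul]
        have h2 : ‖1 - μ‖ * ‖P (y n)‖ ≤ ‖P‖ * ‖T (y n) - μ • y n‖ := by
          calc ‖1 - μ‖ * ‖P (y n)‖ = ‖P (T (y n) - μ • y n)‖ := by
                rw [h1, norm_smul]
            _ ≤ ‖P‖ * ‖T (y n) - μ • y n‖ := P.le_opNorm _
        have hμ : (0:ℝ) < ‖1 - μ‖ := by
          rw [norm_pos_iff, sub_ne_zero]
          exact fun h => hμ1 h.symm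
        calc ‖P (y n)‖ = ‖1 - μ‖⁻¹ * (‖1 - μ‖ * ‖P (y n)‖) := by
              rw [inv_mul_cancel_left₀ hμ.ne']
          _ ≤ ‖1 - μ‖⁻¹ * (‖P‖ * ‖T (y n) - μ • y n‖) :=
              mul_le_mul_of_nonneg_left h2 (inv_nonneg.mpr hμ.le)
          _ = ‖1 - μ‖⁻¹ * ‖P‖ * ‖T (y n) - μ • y n‖ := by ring
      · simpa using hy.const_mul (‖1 - μ‖⁻¹ * ‖P‖)
    set v : ℕ → X := fun n => y n - P (y n) with hv
    have hvnorm : Tendsto (fun n => ‖v n‖) atTop (𝓝 1) := by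
      have hlow : ∀ n, 1 - ‖P (y n)‖ ≤ ‖v n‖ := by
        intro n
        have := norm_sub_norm_le (y n) (P (y n))
        rw [hy1 n] at this
        simpa [hv] using this
      have hhigh : ∀ n, ‖v n‖ ≤ 1 + ‖P (y n)‖ := by
        intro n
        have := norm_sub_le (y n) (P (y n))
        rw [hy1 n] at this
        simpa [hv] using this
      have h1 : Tendsto (fun n => 1 - ‖P (y n)‖) atTop (𝓝 1) := by
        simpa using (tendsto_const_nhds (x := (1:ℝ))).sub hPy0
      have h2 : Tendsto (fun n => 1 + ‖P (y n)‖) atTop (𝓝 1) := by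
        simpa using (tendsto_const_nhds (x := (1:ℝ))).add hPy0
      exact tendsto_of_tendsto_of_tendsto_of_le_of_le h1 h2 hlow hhigh
    have hTv : Tendsto (fun n => ‖(T - P) (v n) - μ • v n‖) atTop (𝓝 0) := by
      apply squeeze_zero (fun n => norm_nonneg _)
        (g := fun n => ‖T (y n) - μ • y n‖ + (1 + ‖μ‖) * ‖P (y n)‖)
      · intro n
        have h1 : (T - P) (v n) - μ • v n
            = (T (y n) - μ • y n) + ((μ - 1) • P (y n)) := by
          simp only [hv, ContinuousLinearMap.sub_apply, map_sub, hTP', hPP',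
            sub_self, sub_zero, smul_sub, sub_smul, one_smul]
          abel
        rw [h1]
        calc ‖(T (y n) - μ • y n) + (μ - 1) • P (y n)‖
            ≤ ‖T (y n) - μ • y n‖ + ‖(μ - 1) • P (y n)‖ := norm_add_le _ _
          _ ≤ ‖T (y n) - μ • y n‖ + (1 + ‖μ‖) * ‖P (y n)‖ := by
              rw [norm_smul]
              have : ‖μ - 1‖ ≤ ‖μ‖ + 1 := by
                calc ‖μ - 1‖ ≤ ‖μ‖ + ‖(1:ℂ)‖ := norm_sub_le _ _
                  _ = ‖μ‖ + 1 := by simp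
              nlinarith [norm_nonneg (P (y n))]
      · simpa using hy.add (hPy0.const_mul (1 + ‖μ‖))
    exact aux_normalize (T - P) μ v hvnorm hTv
end

section
/- Let X be a complex Banach space, T a bounded linear operator on X with ‖T‖ ≤ 1, and P a bounded projection (P ∘ P = P) on X with ‖P‖ ≤ 1 and PT = TP = P. If T is uniformly P-ergodic, then ‖Tⁿ − P‖^{1/n} → β* as n → ∞, where β* := sup{|λ| : λ ∈ σ(T), λ ≠ 1} (supremum over the empty set taken to be 0); equivalently, ‖Tⁿ − P‖ = (β* + αₙ)ⁿ for a sequence αₙ → 0. -/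
open Filter Topology ENNReal

/-- If `a` is a unit, `p` is idempotent, and `a * p = p * a = c • p` with `c ≠ 0, 1`,
then `a - p` is a unit. -/
lemma unit_sub_aux {A : Type*} [Ring A] [Algebra ℂ A] {a p : A} {c : ℂ}
    (hu : IsUnit a) (hpp : p * p = p) (hap : a * p = c • p) (hpa : p * a = c • p)
    (hc0 : c ≠ 0) (hc1 : c ≠ 1) : IsUnit (a - p) := by
  set v : A := ↑hu.unit⁻¹ with hv
  have hva : v * a = 1 := hu.val_inv_mul
  have hav : a * v = 1 := hu.mul_val_inv
  have hpv : p * v = c⁻¹ • p := by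
    have h1 : c • (p * v) = p := by
      rw [← smul_mul_assoc, ← hpa, mul_assoc, hav, mul_one]
    calc p * v = (c⁻¹ * c) • (p * v) := by rw [inv_mul_cancel₀ hc0, one_smul]
    _ = c⁻¹ • p := by rw [mul_smul, h1]
  have hvp : v * p = c⁻¹ • p := by
    have h1 : c • (v * p) = p := by
      rw [← mul_smul_comm, ← hap, ← mul_assoc, hva, one_mul]
    calc v * p = (c⁻¹ * c) • (v * p) := by rw [inv_mul_cancel₀ hc0, one_smul]
    _ = c⁻¹ • p := by rw [mul_smul, h1]
  have hcc1 : c - 1 ≠ 0 := sub_ne_zero.mpr hc1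
  set e : ℂ := c⁻¹ * (c - 1)⁻¹ with he
  have hscal : e * (c - 1) = c⁻¹ := by
    rw [he, mul_assoc, inv_mul_cancel₀ hcc1, mul_one]
  have key1 : (a - p) * (v + e • p) = 1 := by
    have : (a - p) * (v + e • p)
        = a * v + e • (a * p) - (p * v + e • (p * p)) := by
      rw [sub_mul, mul_add, mul_add, mul_smul_comm, mul_smul_comm]
    rw [this, hav, hap, hpp, hpv, smul_smul]
    have h2 : e * c = c⁻¹ + e := by
      have := hscal; rw [mul_sub, mul_one] at this; linear_combination this
    rw [h2, add_smul]
    abel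
  have key2 : (v + e • p) * (a - p) = 1 := by
    have : (v + e • p) * (a - p)
        = v * a + e • (p * a) - (v * p + e • (p * p)) := by
      rw [add_mul, mul_sub, mul_sub, smul_mul_assoc, smul_mul_assoc]
      abel
    rw [this, hva, hpa, hpp, hvp, smul_smul]
    have h2 : e * c = c⁻¹ + e := by
      have := hscal; rw [mul_sub, mul_one] at this; linear_combination this
    rw [h2, add_smul]
    abel
  exact ⟨⟨a - p, v + e • p, key1, key2⟩, rfl⟩

/-- If `a` is a unit, `p` is idempotent, and `a * p = p * a = c • p` with `c ≠ 0, -1`,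
then `a + p` is a unit. -/
lemma unit_add_aux {A : Type*} [Ring A] [Algebra ℂ A] {a p : A} {c : ℂ}
    (hu : IsUnit a) (hpp : p * p = p) (hap : a * p = c • p) (hpa : p * a = c • p)
    (hc0 : c ≠ 0) (hc1 : c ≠ -1) : IsUnit (a + p) := by
  set v : A := ↑hu.unit⁻¹ with hv
  have hva : v * a = 1 := hu.val_inv_mul
  have hav : a * v = 1 := hu.mul_val_inv
  have hpv : p * v = c⁻¹ • p := by
    have h1 : c • (p * v) = p := by
      rw [← smul_mul_assoc, ← hpa, mul_assoc, hav, mul_one]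
    calc p * v = (c⁻¹ * c) • (p * v) := by rw [inv_mul_cancel₀ hc0, one_smul]
    _ = c⁻¹ • p := by rw [mul_smul, h1]
  have hvp : v * p = c⁻¹ • p := by
    have h1 : c • (v * p) = p := by
      rw [← mul_smul_comm, ← hap, ← mul_assoc, hva, one_mul]
    calc v * p = (c⁻¹ * c) • (v * p) := by rw [inv_mul_cancel₀ hc0, one_smul]
    _ = c⁻¹ • p := by rw [mul_smul, h1]
  have hcc1 : c + 1 ≠ 0 := by
    intro h; exact hc1 (by linear_combination h)
  set e : ℂ := -(c⁻¹ * (c + 1)⁻¹) with he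
  have h2 : e * c = -c⁻¹ - e := by
    field_simp [he]
    linear_combination c*(c+1)*he - ((c+1)*(c+1)⁻¹) * mul_inv_cancel₀ hc0 - mul_inv_cancel₀ hcc1
  have key1 : (a + p) * (v + e • p) = 1 := by
    have : (a + p) * (v + e • p)
        = a * v + e • (a * p) + (p * v + e • (p * p)) := by
      rw [add_mul, mul_add, mul_add, mul_smul_comm, mul_smul_comm]
    rw [this, hav, hap, hpp, hpv, smul_smul, h2, sub_smul, neg_smul]
    abel
  have key2 : (v + e • p) * (a + p) = 1 := by
    have : (v + e • p) * (a + p)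
        = v * a + e • (p * a) + (v * p + e • (p * p)) := by
      rw [add_mul, mul_add, mul_add, smul_mul_assoc, smul_mul_assoc]
      abel
    rw [this, hva, hpa, hpp, hvp, smul_smul, h2, sub_smul, neg_smul]
    abel
  exact ⟨⟨a + p, v + e • p, key1, key2⟩, rfl⟩

theorem stmt10 {X : Type*} [NormedAddCommGroup X] [NormedSpace ℂ X] [CompleteSpace X]
    (T P : X →L[ℂ] X) (hT : ‖T‖ ≤ 1) (hPnorm : ‖P‖ ≤ 1)
    (hProj : P.comp P = P) (hPT : P.comp T = P) (hTP : T.comp P = P)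
    (hErg : Tendsto (fun n : ℕ => ‖T ^ n - P‖) atTop (𝓝 0)) :
    Tendsto (fun n : ℕ => ‖T ^ n - P‖ ^ ((1 : ℝ) / (n : ℝ))) atTop
      (𝓝 (sSup {r : ℝ | ∃ μ ∈ spectrum ℂ T, μ ≠ 1 ∧ r = ‖μ‖})) := by
  have hPP : P * P = P := hProj
  have hPT' : P * T = P := hPT
  have hTP' : T * P = P := hTP
  rcases subsingleton_or_nontrivial X with hX | hX
  · -- trivial space
    have hsub : Subsingleton (X →L[ℂ] X) := ⟨fun f g => by ext x; exact Subsingleton.elim _ _⟩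
    have hσ : spectrum ℂ T = ∅ := by
      ext μ; simp [spectrum.mem_iff, isUnit_of_subsingleton]
    have hset : {r : ℝ | ∃ μ ∈ spectrum ℂ T, μ ≠ 1 ∧ r = ‖μ‖} = ∅ := by
      simp [hσ]
    rw [hset, Real.sSup_empty]
    apply Tendsto.congr' _ tendsto_const_nhds
    filter_upwards [eventually_ge_atTop 1] with n hn
    have h0 : T ^ n - P = 0 := Subsingleton.elim _ _
    have hne : (1 : ℝ) / (n : ℝ) ≠ 0 := by
      have : (0:ℝ) < n := by exact_mod_cast hn
      positivity
    rw [h0, norm_zero, Real.zero_rpow hne]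
  · -- nontrivial space
    set S : X →L[ℂ] X := T - P with hS
    have hSP : S * P = 0 := by rw [hS, sub_mul, hTP', hPP, sub_self]
    have hPS : P * S = 0 := by rw [hS, mul_sub, hPT', hPP, sub_self]
    have hTnP : ∀ n : ℕ, T ^ n * P = P := by
      intro n
      induction n with
      | zero => rw [pow_zero, one_mul]
      | succ k ih => rw [pow_succ, mul_assoc, hTP', ih]
    have hpow : ∀ n : ℕ, S ^ (n + 1) = T ^ (n + 1) - P := by
      intro n
      induction n with
      | zero => simp [hS]
      | succ k ih =>
        rw [pow_succ, ih, hS, sub_mul, mul_sub, mul_sub, hTnP, hPT', hPP, ← pow_succ]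
        abel
    have hfin : spectralRadius ℂ S ≠ ⊤ :=
      ((spectrum.spectralRadius_le_nnnorm (𝕜 := ℂ) S).trans_lt ENNReal.coe_lt_top).ne
    set ρ : ℝ := (spectralRadius ℂ S).toReal with hρ
    -- spectral radius of S is < 1
    obtain ⟨N, hN1, hN⟩ : ∃ N : ℕ, 1 ≤ N ∧ ‖T ^ N - P‖ < 1 := by
      have h1 : ∀ᶠ n : ℕ in atTop, ‖T ^ n - P‖ < 1 :=
        hErg.eventually (gt_mem_nhds one_pos)
      obtain ⟨N, hN1, hN⟩ := ((eventually_ge_atTop 1).and h1).exists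
      exact ⟨N, hN1, hN⟩
    obtain ⟨m, rfl⟩ : ∃ m, N = m + 1 := ⟨N - 1, (Nat.succ_pred_eq_of_pos hN1).symm⟩
    have hSN : (‖S ^ (m + 1)‖₊ : ℝ≥0∞) < 1 := by
      rw [hpow m]
      exact_mod_cast hN
    have hsrlt : spectralRadius ℂ S < 1 := by
      have hle := spectrum.spectralRadius_le_pow_nnnorm_pow_one_div ℂ S m
      rw [nnnorm_one, ENNReal.coe_one, ENNReal.one_rpow, mul_one] at hle
      refine hle.trans_lt ?_
      have hp : (0:ℝ) < 1 / ((m:ℝ) + 1) := by positivity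
      calc (‖S ^ (m + 1)‖₊ : ℝ≥0∞) ^ (1 / ((m:ℝ) + 1)) < 1 ^ (1 / ((m:ℝ) + 1)) := by
            exact ENNReal.rpow_lt_rpow hSN hp
        _ = 1 := ENNReal.one_rpow _
    have hmem_le : ∀ μ ∈ spectrum ℂ S, (‖μ‖₊ : ℝ≥0∞) ≤ spectralRadius ℂ S := by
      intro μ hμ
      exact le_iSup₂ (f := fun (k : ℂ) (_ : k ∈ spectrum ℂ S) => (‖k‖₊ : ℝ≥0∞)) μ hμ
    have h1notin : ∀ μ ∈ spectrum ℂ S, μ ≠ 1 := by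
      intro μ hμ h1
      have := (hmem_le μ hμ).trans_lt hsrlt
      rw [h1] at this
      simp at this
    -- inclusion 1 : σ(T) \ {0,1} ⊆ σ(S)
    have incl1 : ∀ μ ∈ spectrum ℂ T, μ ≠ 1 → μ ≠ 0 → μ ∈ spectrum ℂ S := by
      intro μ hμ h1 h0
      rw [spectrum.mem_iff] at hμ ⊢
      intro hu
      apply hμ
      have hap : (algebraMap ℂ (X →L[ℂ] X) μ - S) * P = μ • P := by
        rw [sub_mul, hSP, sub_zero, Algebra.algebraMap_eq_smul_one, smul_mul_assoc, one_mul]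
      have hpa : P * (algebraMap ℂ (X →L[ℂ] X) μ - S) = μ • P := by
        rw [mul_sub, hPS, sub_zero, Algebra.algebraMap_eq_smul_one, mul_smul_comm, mul_one]
      have := unit_sub_aux hu hPP hap hpa h0 h1
      have heq : algebraMap ℂ (X →L[ℂ] X) μ - S - P = algebraMap ℂ (X →L[ℂ] X) μ - T := by
        rw [hS]; abel
      rwa [heq] at this
    -- inclusion 2 : σ(S) \ {0} ⊆ σ(T)
    have incl2 : ∀ μ ∈ spectrum ℂ S, μ ≠ 0 → μ ∈ spectrum ℂ T := by
      intro μ hμ h0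
      have h1 : μ ≠ 1 := h1notin μ hμ
      rw [spectrum.mem_iff] at hμ ⊢
      intro hu
      apply hμ
      have hap : (algebraMap ℂ (X →L[ℂ] X) μ - T) * P = (μ - 1) • P := by
        rw [sub_mul, hTP', Algebra.algebraMap_eq_smul_one, smul_mul_assoc, one_mul, sub_smul,
          one_smul]
      have hpa : P * (algebraMap ℂ (X →L[ℂ] X) μ - T) = (μ - 1) • P := by
        rw [mul_sub, hPT', Algebra.algebraMap_eq_smul_one, mul_smul_comm, mul_one, sub_smul,
          one_smul]
      have hc0 : μ - 1 ≠ 0 := sub_ne_zero.mpr h1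
      have hc1 : μ - 1 ≠ -1 := by
        intro h; exact h0 (by linear_combination h)
      have := unit_add_aux hu hPP hap hpa hc0 hc1
      have heq : algebraMap ℂ (X →L[ℂ] X) μ - T + P = algebraMap ℂ (X →L[ℂ] X) μ - S := by
        rw [hS]; abel
      rwa [heq] at this
    set setT := {r : ℝ | ∃ μ ∈ spectrum ℂ T, μ ≠ 1 ∧ r = ‖μ‖} with hsetT
    have hbdd : BddAbove setT := by
      refine ⟨1, ?_⟩
      rintro r ⟨μ, hμ, -, rfl⟩
      exact (spectrum.norm_le_norm_of_mem hμ).trans hT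
    have hsup_nonneg : 0 ≤ sSup setT := by
      apply Real.sSup_nonneg
      rintro r ⟨μ, hμ, -, rfl⟩
      exact norm_nonneg μ
    have hρ0 : 0 ≤ ρ := ENNReal.toReal_nonneg
    have hβρ : sSup setT ≤ ρ := by
      apply Real.sSup_le _ hρ0
      rintro r ⟨μ, hμ, h1, rfl⟩
      rcases eq_or_ne μ 0 with rfl | h0
      · simpa using hρ0
      · have hμS := incl1 μ hμ h1 h0
        have := hmem_le μ hμS
        calc ‖μ‖ = ((‖μ‖₊ : ℝ≥0∞)).toReal := by simp
          _ ≤ ρ := ENNReal.toReal_mono hfin this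
    have hρβ : ρ ≤ sSup setT := by
      have hkey : spectralRadius ℂ S ≤ ENNReal.ofReal (sSup setT) := by
        rw [spectralRadius]
        refine iSup₂_le fun μ hμ => ?_
        rcases eq_or_ne μ 0 with rfl | h0
        · simp
        · have hμT := incl2 μ hμ h0
          have h1 : μ ≠ 1 := h1notin μ hμ
          have hmem : ‖μ‖ ∈ setT := ⟨μ, hμT, h1, rfl⟩
          calc (‖μ‖₊ : ℝ≥0∞) = ENNReal.ofReal ‖μ‖ := (ofReal_norm μ).symm
            _ ≤ ENNReal.ofReal (sSup setT) := ENNReal.ofReal_le_ofReal (le_csSup hbdd hmem)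
      calc ρ ≤ (ENNReal.ofReal (sSup setT)).toReal := ENNReal.toReal_mono ofReal_ne_top hkey
        _ = sSup setT := ENNReal.toReal_ofReal hsup_nonneg
    have heq : sSup setT = ρ := le_antisymm hβρ hρβ
    rw [heq]
    have hgel := spectrum.pow_nnnorm_pow_one_div_tendsto_nhds_spectralRadius S
    have h2 : Tendsto (fun n : ℕ => ((‖S ^ n‖₊ : ℝ≥0∞) ^ (1 / (n:ℝ))).toReal) atTop (𝓝 ρ) :=
      (ENNReal.tendsto_toReal hfin).comp hgel
    refine h2.congr' ?_
    filter_upwards [eventually_ge_atTop 1] with n hn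
    obtain ⟨k, rfl⟩ : ∃ k, n = k + 1 := ⟨n - 1, (Nat.succ_pred_eq_of_pos hn).symm⟩
    rw [hpow k, ← ENNReal.toReal_rpow, ENNReal.coe_toReal, coe_nnnorm]
end

section
/- Let X be a complex Banach space, T a bounded linear operator on X, and P a bounded projection (P ∘ P = P) on X with PT = TP = P. If T has a spectral gap, i.e. δ_P(T) < 1, then T is uniformly P-ergodic; more precisely, ‖Tⁿ − P‖ ≤ (δ_P(T))ⁿ · ‖I − P‖ for every n ≥ 1, so ‖Tⁿ − P‖ → 0 as n → ∞. -/
open Filter Topology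

theorem stmt12 {X : Type*} [NormedAddCommGroup X] [NormedSpace ℂ X] [CompleteSpace X]
    (T P : X →L[ℂ] X)
    (hProj : P.comp P = P) (hPT : P.comp T = P) (hTP : T.comp P = P)
    (hGap : dobrushinCoeff P T < 1) :
    (∀ n : ℕ, 1 ≤ n → ‖T ^ n - P‖ ≤ (dobrushinCoeff P T) ^ n * ‖(1 : X →L[ℂ] X) - P‖) ∧
    Tendsto (fun n : ℕ => ‖T ^ n - P‖) atTop (𝓝 0) := by
  set δ := dobrushinCoeff P T with hδ
  set S : Set ℝ := {r : ℝ | ∃ x : X, P x = 0 ∧ ‖x‖ ≤ 1 ∧ r = ‖T x‖} with hS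
  have hS0 : (0 : ℝ) ∈ S := ⟨0, by simp, by simp, by simp⟩
  have hbdd : BddAbove S := by
    refine ⟨‖T‖, ?_⟩
    rintro r ⟨x, hx, hx1, rfl⟩
    calc ‖T x‖ ≤ ‖T‖ * ‖x‖ := T.le_opNorm x
    _ ≤ ‖T‖ * 1 := by nlinarith [norm_nonneg T]
    _ = ‖T‖ := mul_one _
  have hδ0 : 0 ≤ δ := le_csSup hbdd hS0
  -- key contraction estimate
  have key : ∀ y : X, P y = 0 → ‖T y‖ ≤ δ * ‖y‖ := by
    intro y hy
    rcases eq_or_ne y 0 with rfl | hy0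
    · simp
    · have hny : (0 : ℝ) < ‖y‖ := norm_pos_iff.mpr hy0
      set c : ℂ := (‖y‖ : ℂ)⁻¹ with hc
      have hcn : ‖c‖ = ‖y‖⁻¹ := by
        simp [hc]
      have hmem : ‖T (c • y)‖ ∈ S := by
        refine ⟨c • y, by simp [hy], ?_, rfl⟩
        rw [norm_smul, hcn]
        rw [inv_mul_cancel₀ hny.ne']
      have hle : ‖T (c • y)‖ ≤ δ := le_csSup hbdd hmem
      have : ‖T (c • y)‖ = ‖y‖⁻¹ * ‖T y‖ := by
        rw [map_smul, norm_smul, hcn]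
      rw [this] at hle
      calc ‖T y‖ = ‖y‖ * (‖y‖⁻¹ * ‖T y‖) := by field_simp
      _ ≤ ‖y‖ * δ := by nlinarith
      _ = δ * ‖y‖ := mul_comm _ _
  have keyn : ∀ (n : ℕ) (y : X), P y = 0 → ‖(T ^ n) y‖ ≤ δ ^ n * ‖y‖ := by
    intro n
    induction n with
    | zero => intro y hy; simp
    | succ n ih =>
      intro y hy
      have hPTy : P (T y) = 0 := by
        have := congrArg (fun f : X →L[ℂ] X => f y) hPT
        simp only [ContinuousLinearMap.comp_apply] at this
        rw [this, hy]
      have h1 : (T ^ (n + 1)) y = (T ^ n) (T y) := by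
        rw [pow_succ]
        rfl
      rw [h1]
      calc ‖(T ^ n) (T y)‖ ≤ δ ^ n * ‖T y‖ := ih (T y) hPTy
      _ ≤ δ ^ n * (δ * ‖y‖) := by
          have := key y hy
          have h2 : (0:ℝ) ≤ δ ^ n := pow_nonneg hδ0 n
          nlinarith
      _ = δ ^ (n + 1) * ‖y‖ := by ring
  -- T^n ∘ P = P for n ≥ 1
  have hTnP : ∀ n : ℕ, 1 ≤ n → ∀ x : X, (T ^ n) (P x) = P x := by
    intro n hn
    induction n with
    | zero => omega
    | succ n ih =>
      intro x
      rcases Nat.eq_or_lt_of_le hn with h | h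
      · have : n = 0 := by omega
        subst this
        have := congrArg (fun f : X →L[ℂ] X => f x) hTP
        simpa [ContinuousLinearMap.comp_apply] using this
      · have hn1 : 1 ≤ n := by omega
        have hTPx : T (P x) = P x := by
          have := congrArg (fun f : X →L[ℂ] X => f x) hTP
          simpa [ContinuousLinearMap.comp_apply] using this
        have h1 : (T ^ (n + 1)) (P x) = (T ^ n) (T (P x)) := by
          rw [pow_succ]
          rfl
        rw [h1, hTPx, ih hn1 x]
  have main : ∀ n : ℕ, 1 ≤ n → ‖T ^ n - P‖ ≤ δ ^ n * ‖(1 : X →L[ℂ] X) - P‖ := by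
    intro n hn
    have hnn : (0:ℝ) ≤ δ ^ n * ‖(1 : X →L[ℂ] X) - P‖ :=
      mul_nonneg (pow_nonneg hδ0 n) (norm_nonneg _)
    refine ContinuousLinearMap.opNorm_le_bound _ hnn ?_
    intro x
    have hx1 : (T ^ n - P) x = (T ^ n) (x - P x) := by
      simp only [ContinuousLinearMap.sub_apply, map_sub]
      rw [hTnP n hn x]
    have hx2 : P (x - P x) = 0 := by
      have := congrArg (fun f : X →L[ℂ] X => f x) hProj
      simp only [ContinuousLinearMap.comp_apply] at this
      simp [map_sub, this]
    calc ‖(T ^ n - P) x‖ = ‖(T ^ n) (x - P x)‖ := by rw [hx1]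
    _ ≤ δ ^ n * ‖x - P x‖ := keyn n _ hx2
    _ = δ ^ n * ‖((1 : X →L[ℂ] X) - P) x‖ := by
        simp [ContinuousLinearMap.sub_apply]
    _ ≤ δ ^ n * (‖(1 : X →L[ℂ] X) - P‖ * ‖x‖) := by
        have := ((1 : X →L[ℂ] X) - P).le_opNorm x
        have h2 : (0:ℝ) ≤ δ ^ n := pow_nonneg hδ0 n
        nlinarith
    _ = δ ^ n * ‖(1 : X →L[ℂ] X) - P‖ * ‖x‖ := by ring
  refine ⟨main, ?_⟩
  have hpow : Tendsto (fun n : ℕ => δ ^ n * ‖(1 : X →L[ℂ] X) - P‖) atTop (𝓝 0) := by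
    have := (tendsto_pow_atTop_nhds_zero_of_lt_one hδ0 hGap).mul_const
      (‖(1 : X →L[ℂ] X) - P‖)
    simpa using this
  refine squeeze_zero' ?_ ?_ hpow
  · exact Eventually.of_forall fun n => norm_nonneg _
  · filter_upwards [eventually_ge_atTop 1] with n hn
    exact main n hn
end
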